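/- arXiv:1503.00998 — 7 statements merged into one kernel-verified Lean document; each statement's English description precedes it below -/
import Mathlib

section
/- If G is an r-regular graph on n vertices (r ≥ 1), then the number of dominating sets of G is at most (2^(r+1) - 1)^(n/(r+1)). -/
open Finset NNReal


private lemma gm_superadd {ι : Type*} (T : Finset ι) (hT : T.Nonempty) (a b : ι → ℝ≥0) :
    (∏ i ∈ T, a i) ^ ((T.card : ℝ)⁻¹) + (∏ i ∈ T, b i) ^ ((T.card : ℝ)⁻¹) ≤
      (∏ i ∈ T, (a i + b i)) ^ ((T.card : ℝ)⁻¹) := by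
  have htpos : (0 : ℝ) < (T.card : ℝ) := by
    exact_mod_cast Finset.card_pos.mpr hT
  by_cases hQ : ∃ i ∈ T, a i + b i = 0
  · obtain ⟨i, hi, h0⟩ := hQ
    have ha0 : a i = 0 := by
      have := add_eq_zero.mp h0; exact this.1
    have hb0 : b i = 0 := (add_eq_zero.mp h0).2
    have h1 : (∏ i ∈ T, a i) = 0 := Finset.prod_eq_zero hi ha0
    have h2 : (∏ i ∈ T, b i) = 0 := Finset.prod_eq_zero hi hb0
    rw [h1, h2, NNReal.zero_rpow (by positivity), add_zero]
    exact zero_le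
  · push_neg at hQ
    set t : ℝ := (T.card : ℝ)
    set w : ι → ℝ≥0 := fun _ => ((T.card : ℝ≥0))⁻¹ with hw
    have hcard0 : ((T.card : ℝ≥0)) ≠ 0 := by
      exact_mod_cast Finset.card_pos.mpr hT |>.ne'
    have hwsum : ∑ i ∈ T, w i = 1 := by
      rw [hw]; simp [Finset.sum_const, nsmul_eq_mul]
      exact mul_inv_cancel₀ hcard0
    have hwc : ∀ i, ((w i : ℝ)) = t⁻¹ := by
      intro i; rw [hw]; push_cast; rfl
    have main : ∀ f : ι → ℝ≥0,
        (∏ i ∈ T, f i) ^ (t⁻¹) ≤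
          (∑ i ∈ T, w i * (f i / (a i + b i))) * (∏ i ∈ T, (a i + b i)) ^ (t⁻¹) := by
      intro f
      have hsplit : ∏ i ∈ T, f i = (∏ i ∈ T, f i / (a i + b i)) * ∏ i ∈ T, (a i + b i) := by
        rw [← Finset.prod_mul_distrib]
        exact Finset.prod_congr rfl fun i hi => (div_mul_cancel₀ _ (hQ i hi)).symm
      rw [hsplit, NNReal.mul_rpow]
      apply mul_le_mul_left
      have := NNReal.geom_mean_le_arith_mean_weighted T w (fun i => f i / (a i + b i)) hwsum
      refine le_trans (le_of_eq ?_) this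
      rw [← NNReal.finset_prod_rpow]
      exact Finset.prod_congr rfl fun i hi => by rw [hwc i]
    calc (∏ i ∈ T, a i) ^ (t⁻¹) + (∏ i ∈ T, b i) ^ (t⁻¹)
        ≤ (∑ i ∈ T, w i * (a i / (a i + b i))) * (∏ i ∈ T, (a i + b i)) ^ (t⁻¹)
          + (∑ i ∈ T, w i * (b i / (a i + b i))) * (∏ i ∈ T, (a i + b i)) ^ (t⁻¹) :=
          add_le_add (main a) (main b)
      _ = (∑ i ∈ T, w i * ((a i + b i) / (a i + b i))) * (∏ i ∈ T, (a i + b i)) ^ (t⁻¹) := by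
          rw [← add_mul, ← Finset.sum_add_distrib]
          congr 1
          refine Finset.sum_congr rfl fun i hi => ?_
          rw [← mul_add, ← add_div]
      _ = (∏ i ∈ T, (a i + b i)) ^ (t⁻¹) := by
          rw [show (∑ i ∈ T, w i * ((a i + b i) / (a i + b i))) = 1 from ?_, one_mul]
          rw [← hwsum]
          refine Finset.sum_congr rfl fun i hi => ?_
          rw [div_self (hQ i hi), mul_one]

private lemma key_ineq {ι : Type*} [DecidableEq ι] {I T : Finset ι} (hTI : T ⊆ I) {k : ℕ} (hk : 0 < k)
    (hkT : k ≤ T.card) (a b : ℝ≥0) (A B C : ι → ℝ≥0)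
    (ha : a ^ k ≤ ∏ i ∈ I, A i) (hb : b ^ k ≤ ∏ i ∈ I, B i)
    (hT : ∀ i ∈ T, A i + B i ≤ C i)
    (hA : ∀ i ∈ I \ T, A i ≤ C i) (hB : ∀ i ∈ I \ T, B i ≤ C i) :
    (a + b) ^ k ≤ ∏ i ∈ I, C i := by
  have hTne : T.Nonempty := Finset.card_pos.mp (lt_of_lt_of_le hk hkT)
  set t : ℝ := (T.card : ℝ) with hts
  have ht : (0 : ℝ) < t := by rw [hts]; exact_mod_cast Finset.card_pos.mpr hTne
  have hprod : ∀ f : ι → ℝ≥0, ∏ i ∈ I, f i = (∏ i ∈ T, f i) * ∏ i ∈ I \ T, f i := by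
    intro f; rw [← Finset.prod_sdiff hTI, mul_comm]
  set M : ℝ≥0 := ∏ i ∈ I \ T, C i with hM
  have haM : a ^ k ≤ (∏ i ∈ T, A i) * M :=
    le_trans ha (by rw [hprod A]; exact mul_le_mul_right (Finset.prod_le_prod' hA) _)
  have hbM : b ^ k ≤ (∏ i ∈ T, B i) * M :=
    le_trans hb (by rw [hprod B]; exact mul_le_mul_right (Finset.prod_le_prod' hB) _)
  suffices h : (a + b) ^ k ≤ (∏ i ∈ T, (A i + B i)) * M by
    refine le_trans h ?_
    rw [hprod C]
    exact mul_le_mul_left (Finset.prod_le_prod' hT) M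
  by_cases hM0 : M = 0
  · rw [hM0, mul_zero] at haM hbM ⊢
    have ha0 : a = 0 := pow_eq_zero_iff hk.ne' |>.mp (le_antisymm haM zero_le)
    have hb0 : b = 0 := pow_eq_zero_iff hk.ne' |>.mp (le_antisymm hbM zero_le)
    simp [ha0, hb0, zero_pow hk.ne']
  · have h1 : ∀ (c : ℝ≥0) (P : ℝ≥0), c ^ k ≤ P * M →
        c ^ ((k : ℝ) / t) ≤ P ^ (t⁻¹) * M ^ (t⁻¹) := by
      intro c P h
      have h2 : (c ^ (k : ℝ)) ^ (t⁻¹) ≤ (P * M) ^ (t⁻¹) := by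
        apply NNReal.rpow_le_rpow _ (by positivity)
        rw [NNReal.rpow_natCast]; exact h
      rw [← NNReal.rpow_mul, NNReal.mul_rpow] at h2
      rw [div_eq_mul_inv]; exact h2
    have ha' := h1 a _ haM
    have hb' := h1 b _ hbM
    have hgm := gm_superadd T hTne A B
    set Q : ℝ≥0 := ∏ i ∈ T, (A i + B i) with hQ
    have h2 : a ^ ((k : ℝ) / t) + b ^ ((k : ℝ) / t) ≤ (Q * M) ^ (t⁻¹) := by
      rw [NNReal.mul_rpow]
      calc a ^ ((k : ℝ) / t) + b ^ ((k : ℝ) / t)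
          ≤ ((∏ i ∈ T, A i) ^ (t⁻¹) + (∏ i ∈ T, B i) ^ (t⁻¹)) * M ^ (t⁻¹) := by
            rw [add_mul]; exact add_le_add ha' hb'
        _ ≤ Q ^ (t⁻¹) * M ^ (t⁻¹) := mul_le_mul_left hgm _
    have h3 : (a + b) ^ ((k : ℝ) / t) ≤ (Q * M) ^ (t⁻¹) := by
      refine le_trans (NNReal.rpow_add_le_add_rpow a b (by positivity) ?_) h2
      rw [div_le_one ht, hts]
      exact_mod_cast hkT
    have h4 := NNReal.rpow_le_rpow h3 ht.le
    rw [← NNReal.rpow_mul, ← NNReal.rpow_mul, div_mul_cancel₀ _ ht.ne',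
      inv_mul_cancel₀ ht.ne', NNReal.rpow_one, NNReal.rpow_natCast] at h4
    exact h4

private lemma shearer {V ι : Type*} [DecidableEq V] [DecidableEq ι] (A : ι → Finset V)
    (I : Finset ι) (k : ℕ) (hk : 0 < k) [∀ x i, Decidable (x ∈ A i)] :
    ∀ (n : ℕ) (U : Finset V), U.card ≤ n → ∀ F : Finset (Finset V), (∀ S ∈ F, S ⊆ U) →
    (∀ x ∈ U, k ≤ (I.filter fun i => x ∈ A i).card) →
    ((F.card : ℝ≥0)) ^ k ≤ ∏ i ∈ I, ((F.image (· ∩ A i)).card : ℝ≥0) := by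
  intro n
  induction n with
  | zero =>
    intro U hU F hF _
    have hUe : U = ∅ := Finset.card_eq_zero.mp (Nat.le_zero.mp hU)
    subst hUe
    have hFs : F ⊆ {∅} := fun S hS =>
      Finset.mem_singleton.mpr (Finset.subset_empty.mp (hF S hS))
    rcases Finset.subset_singleton_iff.mp hFs with rfl | rfl
    · simp [zero_pow hk.ne']
    · simp
  | succ n ih =>
    intro U hU F hF hcov
    rcases U.eq_empty_or_nonempty with rfl | ⟨x, hx⟩
    · have hFs : F ⊆ {∅} := fun S hS =>
        Finset.mem_singleton.mpr (Finset.subset_empty.mp (hF S hS))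
      rcases Finset.subset_singleton_iff.mp hFs with rfl | rfl
      · simp [zero_pow hk.ne']
      · simp
    · set U' := U.erase x with hU'
      set F0 := F.filter (fun S => x ∉ S) with hF0
      set F1 := (F.filter (fun S => x ∈ S)).image (fun S => S.erase x) with hF1
      have hinj : Set.InjOn (fun S => Finset.erase S x) ↑(F.filter (fun S => x ∈ S)) := by
        intro S hS T hT h
        simp only [Finset.coe_filter, Set.mem_setOf_eq] at hS hT
        have := congrArg (insert x) h
        simpa [Finset.insert_erase hS.2, Finset.insert_erase hT.2] using this
      have hcard1 : F1.card = (F.filter (fun S => x ∈ S)).card :=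
        Finset.card_image_of_injOn hinj
      have hcardF : F.card = F0.card + F1.card := by
        rw [hcard1, hF0]
        have h := Finset.card_filter_add_card_filter_not (s := F)
          (p := fun S => x ∈ S)
        omega
      have hF0U : ∀ S ∈ F0, S ⊆ U' := by
        intro S hS
        rw [hF0, Finset.mem_filter] at hS
        exact Finset.subset_erase.mpr ⟨hF S hS.1, hS.2⟩
      have hF1U : ∀ S ∈ F1, S ⊆ U' := by
        intro S hS
        rw [hF1] at hS
        obtain ⟨T, hT, rfl⟩ := Finset.mem_image.mp hS
        rw [Finset.mem_filter] at hT
        exact Finset.erase_subset_erase x (hF T hT.1)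
      have hcov' : ∀ y ∈ U', k ≤ (I.filter fun i => y ∈ A i).card := fun y hy =>
        hcov y (Finset.mem_of_mem_erase hy)
      have hUcard : U'.card ≤ n := by
        rw [hU', Finset.card_erase_of_mem hx]
        omega
      have iha := ih U' hUcard F0 hF0U hcov'
      have ihb := ih U' hUcard F1 hF1U hcov'
      -- trace inequalities
      have htrace1 : ∀ i ∈ I, x ∈ A i →
          (F0.image (· ∩ A i)).card + (F1.image (· ∩ A i)).card ≤ (F.image (· ∩ A i)).card := by
        intro i _ hxA
        set E0 := F0.image (· ∩ A i) with hE0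
        set E1 := (F1.image (· ∩ A i)).image (insert x) with hE1
        have hxnot : ∀ B ∈ F1.image (· ∩ A i), x ∉ B := by
          intro B hB
          obtain ⟨S, hS, rfl⟩ := Finset.mem_image.mp hB
          obtain ⟨T, _, rfl⟩ := Finset.mem_image.mp hS
          simp [Finset.mem_inter, Finset.mem_erase]
        have hE1card : E1.card = (F1.image (· ∩ A i)).card := by
          apply Finset.card_image_of_injOn
          intro B hB B' hB' h
          have hxB := hxnot B hB
          have hxB' := hxnot B' hB'
          have := congrArg (fun s => Finset.erase s x) h
          simpa [Finset.erase_insert hxB, Finset.erase_insert hxB'] using this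
        have hsub : E0 ∪ E1 ⊆ F.image (· ∩ A i) := by
          intro B hB
          rcases Finset.mem_union.mp hB with hB | hB
          · obtain ⟨S, hS, rfl⟩ := Finset.mem_image.mp hB
            rw [hF0, Finset.mem_filter] at hS
            exact Finset.mem_image.mpr ⟨S, hS.1, rfl⟩
          · obtain ⟨B', hB', rfl⟩ := Finset.mem_image.mp hB
            obtain ⟨S, hS, rfl⟩ := Finset.mem_image.mp hB'
            obtain ⟨T, hT, rfl⟩ := Finset.mem_image.mp hS
            rw [Finset.mem_filter] at hT
            refine Finset.mem_image.mpr ⟨T, hT.1, ?_⟩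
            ext u
            by_cases h : u = x
            · subst h
              simp [Finset.mem_insert, Finset.mem_inter, Finset.mem_erase, hT.2, hxA]
            · simp [Finset.mem_insert, Finset.mem_inter, Finset.mem_erase, h]
        have hdisj : Disjoint E0 E1 := by
          rw [Finset.disjoint_left]
          intro B hB hB'
          obtain ⟨S, hS, rfl⟩ := Finset.mem_image.mp hB
          rw [hF0, Finset.mem_filter] at hS
          obtain ⟨B', hB'', hBeq⟩ := Finset.mem_image.mp hB'
          have : x ∈ S ∩ A i := hBeq ▸ Finset.mem_insert_self x B'
          exact hS.2 (Finset.mem_inter.mp this).1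
        calc E0.card + (F1.image (· ∩ A i)).card = E0.card + E1.card := by rw [hE1card]
          _ = (E0 ∪ E1).card := (Finset.card_union_of_disjoint hdisj).symm
          _ ≤ (F.image (· ∩ A i)).card := Finset.card_le_card hsub
      have htrace2 : ∀ i ∈ I, x ∉ A i →
          (F0.image (· ∩ A i)).card ≤ (F.image (· ∩ A i)).card ∧
          (F1.image (· ∩ A i)).card ≤ (F.image (· ∩ A i)).card := by
        intro i _ hxA
        constructor
        · exact Finset.card_le_card (Finset.image_subset_image (Finset.filter_subset _ _))
        · apply Finset.card_le_card
          intro B hB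
          obtain ⟨S, hS, rfl⟩ := Finset.mem_image.mp hB
          obtain ⟨T, hT, rfl⟩ := Finset.mem_image.mp hS
          rw [Finset.mem_filter] at hT
          refine Finset.mem_image.mpr ⟨T, hT.1, ?_⟩
          ext u
          by_cases h : u = x
          · subst h; simp [Finset.mem_inter, Finset.mem_erase, hxA]
          · simp [Finset.mem_inter, Finset.mem_erase, h]
      -- apply key_ineq
      have hkey := key_ineq (T := I.filter fun i => x ∈ A i) (Finset.filter_subset _ _) hk
        (hcov x hx) (F0.card : ℝ≥0) (F1.card : ℝ≥0)
        (fun i => ((F0.image (· ∩ A i)).card : ℝ≥0))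
        (fun i => ((F1.image (· ∩ A i)).card : ℝ≥0))
        (fun i => ((F.image (· ∩ A i)).card : ℝ≥0))
        iha ihb
        (by
          intro i hi
          rw [Finset.mem_filter] at hi
          exact_mod_cast htrace1 i hi.1 hi.2)
        (by
          intro i hi
          rw [Finset.mem_sdiff, Finset.mem_filter] at hi
          have := htrace2 i hi.1 (fun h => hi.2 ⟨hi.1, h⟩)
          exact_mod_cast this.1)
        (by
          intro i hi
          rw [Finset.mem_sdiff, Finset.mem_filter] at hi
          have := htrace2 i hi.1 (fun h => hi.2 ⟨hi.1, h⟩)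
          exact_mod_cast this.2)
      rw [hcardF]
      push_cast
      exact hkey

/-- If `G` is an `r`-regular graph on `n` vertices (`r ≥ 1`), then the number of
dominating sets of `G` is at most `(2^(r+1) - 1)^(n/(r+1))`. -/
theorem stmt0 {V : Type*} [Fintype V] (G : SimpleGraph V) [DecidableRel G.Adj] (r : ℕ) (hr : 1 ≤ r)
    (hreg : G.IsRegularOfDegree r) :
    ({S : Finset V | ∀ v : V, ∃ u ∈ S, u = v ∨ G.Adj u v}.ncard : ℝ) ≤
      ((2 : ℝ) ^ (r + 1) - 1) ^ ((Fintype.card V : ℝ) / (r + 1)) := by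
  classical
  set k := r + 1 with hk
  have hkpos : 0 < k := Nat.succ_pos r
  set F := Finset.univ.filter (fun S : Finset V => ∀ v : V, ∃ u ∈ S, u = v ∨ G.Adj u v) with hFdef
  have hset : {S : Finset V | ∀ v : V, ∃ u ∈ S, u = v ∨ G.Adj u v} = ↑F := by
    ext S; simp [hFdef]
  rw [hset, Set.ncard_coe_finset]
  set N : V → Finset V := fun v => insert v (G.neighborFinset v) with hN
  have hNcard : ∀ v, (N v).card = k := by
    intro v
    rw [hN]
    rw [Finset.card_insert_of_notMem (by simp [SimpleGraph.mem_neighborFinset])]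
    rw [show (G.neighborFinset v).card = G.degree v from rfl, hreg v]
  have hcov : ∀ x : V, x ∈ (Finset.univ : Finset V) →
      k ≤ ((Finset.univ : Finset V).filter fun v => x ∈ N v).card := by
    intro x _
    have : ((Finset.univ : Finset V).filter fun v => x ∈ N v) = N x := by
      ext v
      simp only [Finset.mem_filter, Finset.mem_univ, true_and, hN, Finset.mem_insert,
        SimpleGraph.mem_neighborFinset]
      rw [eq_comm, G.adj_comm]
    rw [this, hNcard x]
  have hsh := shearer N Finset.univ k hkpos (Fintype.card V) Finset.univ
    (by rw [Finset.card_univ]) F (fun S _ => Finset.subset_univ S) hcov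
  set c : ℕ := 2 ^ k - 1 with hc
  have h2k : 1 ≤ 2 ^ k := Nat.one_le_two_pow
  have htrace : ∀ v : V, (F.image (· ∩ N v)).card ≤ c := by
    intro v
    have hsub : F.image (· ∩ N v) ⊆ ((N v).powerset).erase ∅ := by
      intro B hB
      obtain ⟨S, hS, rfl⟩ := Finset.mem_image.mp hB
      rw [hFdef, Finset.mem_filter] at hS
      obtain ⟨u, hu, hadj⟩ := hS.2 v
      have huN : u ∈ N v := by
        rw [hN, Finset.mem_insert, SimpleGraph.mem_neighborFinset]
        rcases hadj with rfl | h
        · exact Or.inl rfl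
        · exact Or.inr h.symm
      refine Finset.mem_erase.mpr ⟨?_, Finset.mem_powerset.mpr Finset.inter_subset_right⟩
      exact Finset.nonempty_iff_ne_empty.mp ⟨u, Finset.mem_inter.mpr ⟨hu, huN⟩⟩
    calc (F.image (· ∩ N v)).card ≤ (((N v).powerset).erase ∅).card := Finset.card_le_card hsub
      _ = 2 ^ k - 1 := by
          rw [Finset.card_erase_of_mem (Finset.mem_powerset.mpr (Finset.empty_subset _)),
            Finset.card_powerset, hNcard v]
  have hfinal : ((F.card : ℝ≥0)) ^ k ≤ ((c : ℝ≥0)) ^ (Fintype.card V) := by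
    refine le_trans hsh ?_
    calc ∏ v : V, ((F.image (· ∩ N v)).card : ℝ≥0) ≤ ∏ _v : V, (c : ℝ≥0) :=
          Finset.prod_le_prod' fun v _ => by exact_mod_cast htrace v
      _ = (c : ℝ≥0) ^ (Fintype.card V) := by rw [Finset.prod_const, Finset.card_univ]
  -- move to ℝ
  have hfinalR : ((F.card : ℝ)) ^ k ≤ ((c : ℝ)) ^ (Fintype.card V) := by
    exact_mod_cast hfinal
  have hX : (0 : ℝ) ≤ (F.card : ℝ) := Nat.cast_nonneg _
  have hkR : (0 : ℝ) < (k : ℝ) := by exact_mod_cast hkpos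
  have h5 : (((F.card : ℝ)) ^ k) ^ ((k : ℝ)⁻¹) ≤ (((c : ℝ)) ^ (Fintype.card V)) ^ ((k : ℝ)⁻¹) :=
    Real.rpow_le_rpow (by positivity) hfinalR (by positivity)
  rw [← Real.rpow_natCast (F.card : ℝ) k, ← Real.rpow_natCast (c : ℝ) (Fintype.card V),
    ← Real.rpow_mul hX, ← Real.rpow_mul (Nat.cast_nonneg c),
    mul_inv_cancel₀ hkR.ne', Real.rpow_one] at h5
  have hcR : (c : ℝ) = (2 : ℝ) ^ (r + 1) - 1 := by
    rw [hc, Nat.cast_sub h2k, hk]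
    push_cast
    ring
  have hkcast : ((k : ℕ) : ℝ) = (r : ℝ) + 1 := by rw [hk]; push_cast; ring
  calc (F.card : ℝ) ≤ (c : ℝ) ^ ((Fintype.card V : ℝ) * (k : ℝ)⁻¹) := h5
    _ = ((2 : ℝ) ^ (r + 1) - 1) ^ ((Fintype.card V : ℝ) / ((r : ℝ) + 1)) := by
        rw [hcR, div_eq_mul_inv, hkcast]
end

section
/- If G is an r-regular graph on n vertices (r ≥ 1) and 𝓛 is a coloring condition over a finite color set K, then the number of 𝓛-legal neighborhood colorings of G is at most N(r,𝓛)^(n/r), where N(r,𝓛) is the number of functions from [r] to K whose multiset image is in 𝓛. -/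
set_option maxHeartbeats 1000000
open Finset
namespace ShearerAux
variable {α : Type*} {A : Finset α}

def cnt (A : Finset α) {β : Type*} [DecidableEq β] (u : α → β) (a : α) : ℕ :=
  (A.filter fun b => u b = u a).card
noncomputable def phi (A : Finset α) {β : Type*} [DecidableEq β] (u : α → β) : ℝ :=
  ∑ a ∈ A, Real.log (cnt A u a)
lemma cnt_pos {β : Type*} [DecidableEq β] {u : α → β} {a : α} (ha : a ∈ A) :
    0 < cnt A u a :=
  Finset.card_pos.2 ⟨a, Finset.mem_filter.2 ⟨ha, rfl⟩⟩
lemma cnt_cast_pos {β : Type*} [DecidableEq β] (u : α → β) {a : α} (ha : a ∈ A) :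
    (0:ℝ) < (cnt A u a : ℝ) := by exact_mod_cast cnt_pos ha
lemma sum_log_le {ι : Type*} (t : Finset ι) (w x : ι → ℝ)
    (h0 : ∀ i ∈ t, 0 ≤ w i) (hx : ∀ i ∈ t, w i ≠ 0 → 0 < x i)
    (hW : 0 < ∑ i ∈ t, w i) :
    ∑ i ∈ t, w i * Real.log (x i) ≤
      (∑ i ∈ t, w i) * Real.log ((∑ i ∈ t, w i * x i) / (∑ i ∈ t, w i)) := by
  set W := ∑ i ∈ t, w i with hWdef
  have hSx : 0 < ∑ i ∈ t, w i * x i := by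
    obtain ⟨i₀, hi₀, hwi₀⟩ : ∃ i ∈ t, 0 < w i := by
      by_contra h
      push_neg at h
      have : W ≤ 0 := Finset.sum_nonpos (fun i hi => h i hi)
      linarith
    refine Finset.sum_pos' (fun i hi => ?_) ⟨i₀, hi₀, mul_pos hwi₀ (hx i₀ hi₀ hwi₀.ne')⟩
    rcases eq_or_ne (w i) 0 with h | h
    · simp [h]
    · exact le_of_lt (mul_pos ((h0 i hi).lt_of_ne (Ne.symm h)) (hx i hi h))
  set c := (∑ i ∈ t, w i * x i) / W with hc
  have hcpos : 0 < c := div_pos hSx hW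
  have key : ∀ i ∈ t, w i * Real.log (x i) - w i * Real.log c ≤ w i * (x i / c) - w i := by
    intro i hi
    rcases eq_or_ne (w i) 0 with h | h
    · simp [h]
    · have hxi := hx i hi h
      have h1 : Real.log (x i / c) ≤ x i / c - 1 :=
        Real.log_le_sub_one_of_pos (div_pos hxi hcpos)
      rw [Real.log_div hxi.ne' hcpos.ne'] at h1
      have hwi : 0 < w i := (h0 i hi).lt_of_ne (Ne.symm h)
      nlinarith [mul_le_mul_of_nonneg_left h1 hwi.le]
  have hsum := Finset.sum_le_sum key
  simp only [← mul_div_assoc] at hsum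
  rw [Finset.sum_sub_distrib, Finset.sum_sub_distrib, ← Finset.sum_mul,
    ← Finset.sum_div] at hsum
  have hcc : (∑ i ∈ t, w i * x i) / c = W := by
    rw [hc]; field_simp
  rw [hcc] at hsum
  linarith

/-- If the fibers of `u` and `w` agree on `A`, then `Φ(u) = Φ(w)`. -/
lemma phi_congr {β γ : Type*} [DecidableEq β] [DecidableEq γ] {u : α → β} {w : α → γ}
    (h : ∀ a ∈ A, ∀ b ∈ A, (u b = u a ↔ w b = w a)) : phi A u = phi A w := by
  refine Finset.sum_congr rfl fun a ha => ?_
  have : (A.filter fun b => u b = u a) = (A.filter fun b => w b = w a) := by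
    apply Finset.filter_congr
    intro b hb
    simpa using h a ha b hb
  unfold cnt
  rw [this]

/-- If the fibers of `u` refine those of `w` on `A`, then `Φ(u) ≤ Φ(w)`. -/
lemma phi_mono {β γ : Type*} [DecidableEq β] [DecidableEq γ] {u : α → β} {w : α → γ}
    (h : ∀ a ∈ A, ∀ b ∈ A, u b = u a → w b = w a) : phi A u ≤ phi A w := by
  refine Finset.sum_le_sum fun a ha => ?_
  have hsub : (A.filter fun b => u b = u a) ⊆ (A.filter fun b => w b = w a) := by
    intro b hb
    rw [Finset.mem_filter] at hb ⊢
    exact ⟨hb.1, h a ha b hb.1 hb.2⟩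
  have := Finset.card_le_card hsub
  exact Real.log_le_log (by exact_mod_cast cnt_pos (u := u) ha) (by exact_mod_cast this)

lemma phi_of_injOn {β : Type*} [DecidableEq β] {u : α → β}
    (h : ∀ a ∈ A, ∀ b ∈ A, u b = u a → b = a) : phi A u = 0 := by
  refine Finset.sum_eq_zero fun a ha => ?_
  have : (A.filter fun b => u b = u a) = {a} := by
    ext b
    simp only [Finset.mem_filter, Finset.mem_singleton]
    constructor
    · rintro ⟨hb, he⟩; exact h a ha b hb he
    · rintro rfl; exact ⟨ha, rfl⟩
  unfold cnt
  rw [this]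
  simp

lemma phi_of_const {β : Type*} [DecidableEq β] {u : α → β}
    (h : ∀ a ∈ A, ∀ b ∈ A, u b = u a) : phi A u = (A.card : ℝ) * Real.log (A.card) := by
  have : ∀ a ∈ A, Real.log (cnt A u a) = Real.log (A.card) := by
    intro a ha
    have : (A.filter fun b => u b = u a) = A := by
      apply Finset.filter_true_of_mem
      intro b hb; exact h a ha b hb
    unfold cnt; rw [this]
  rw [phi, Finset.sum_congr rfl this, Finset.sum_const, nsmul_eq_mul]


/-- Summing `F(u a) / |fiber of a|` over `A` gives the sum of `F` over fiber values. -/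
lemma sum_div_cnt {δ : Type*} [DecidableEq δ] (u : α → δ) (F : δ → ℝ) :
    ∑ a ∈ A, F (u a) / (cnt A u a : ℝ) = ∑ t ∈ A.image u, F t := by
  rw [← Finset.sum_fiberwise_of_maps_to (fun a ha => Finset.mem_image_of_mem u ha)
      (fun a => F (u a) / (cnt A u a : ℝ))]
  refine Finset.sum_congr rfl fun t ht => ?_
  have hkey : ∀ a ∈ A.filter (fun a => u a = t),
      F (u a) / (cnt A u a : ℝ) = F t / ((A.filter fun b => u b = t).card : ℝ) := by
    intro a ha
    rw [Finset.mem_filter] at ha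
    have hc : cnt A u a = (A.filter fun b => u b = t).card := by
      unfold cnt; simp only [ha.2]
    rw [hc, ha.2]
  rw [Finset.sum_congr rfl hkey, Finset.sum_const, nsmul_eq_mul]
  have hpos : 0 < ((A.filter fun b => u b = t).card : ℝ) := by
    rw [Finset.mem_image] at ht
    obtain ⟨a, ha, rfl⟩ := ht
    have := cnt_pos (u := u) ha
    unfold cnt at this
    exact_mod_cast this
  field_simp

section Super
variable {B C E : Type*} [DecidableEq B] [DecidableEq C] [DecidableEq E]
variable (f : α → B) (g : α → C) (e : α → E)

/-- The key double-counting bound. -/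
lemma sum_F_le (A : Finset α) :
    ∑ t ∈ A.image (fun a => (f a, g a, e a)),
        (((A.filter fun b => f b = t.1 ∧ e b = t.2.2).card : ℝ) *
          ((A.filter fun b => g b = t.2.1 ∧ e b = t.2.2).card : ℝ)) /
          ((A.filter fun b => e b = t.2.2).card : ℝ)
      ≤ (A.card : ℝ) := by
  classical
  set u : α → B × C × E := fun a => (f a, g a, e a) with hu
  have hmaps : ∀ t ∈ A.image u, t.2.2 ∈ A.image e := by
    intro t ht
    rw [Finset.mem_image] at ht ⊢
    obtain ⟨a, ha, rfl⟩ := ht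
    exact ⟨a, ha, rfl⟩
  rw [← Finset.sum_fiberwise_of_maps_to hmaps]
  have hcard : (A.card : ℝ) = ∑ z ∈ A.image e, ((A.filter fun b => e b = z).card : ℝ) := by
    exact_mod_cast congrArg Nat.cast
      (Finset.card_eq_sum_card_fiberwise (fun a ha => Finset.mem_image_of_mem e ha))
  rw [hcard]
  refine Finset.sum_le_sum fun z hz => ?_
  -- the inner sum over triples with e-component z
  set Tz := (A.image u).filter (fun t => t.2.2 = z) with hTz
  have hz' : 0 < ((A.filter fun b => e b = z).card : ℝ) := by
    rw [Finset.mem_image] at hz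
    obtain ⟨a, ha, rfl⟩ := hz
    have := cnt_pos (u := e) ha
    unfold cnt at this
    exact_mod_cast this
  have hnat : ∑ t ∈ Tz, ((A.filter fun b => f b = t.1 ∧ e b = t.2.2).card) *
      ((A.filter fun b => g b = t.2.1 ∧ e b = t.2.2).card)
      ≤ ((A.filter fun b => e b = z).card) * ((A.filter fun b => e b = z).card) := by
    set W : B × C × E → Finset (α × α) := fun t =>
      (A.filter fun b => f b = t.1 ∧ e b = t.2.2) ×ˢ (A.filter fun c => g c = t.2.1 ∧ e c = t.2.2)
      with hW
    have hdisj : ∀ s ∈ Tz, ∀ t ∈ Tz, s ≠ t → Disjoint (W s) (W t) := by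
      intro s hs t ht hst
      rw [Finset.mem_filter] at hs ht
      rw [Finset.disjoint_left]
      rintro ⟨b, c⟩ hbs hbt
      simp only [hW, Finset.mem_product, Finset.mem_filter] at hbs hbt
      apply hst
      have h1 : s.1 = t.1 := by rw [← hbs.1.2.1, ← hbt.1.2.1]
      have h2 : s.2.1 = t.2.1 := by rw [← hbs.2.2.1, ← hbt.2.2.1]
      have h3 : s.2.2 = t.2.2 := by rw [hs.2, ht.2]
      exact Prod.ext h1 (Prod.ext h2 h3)
    have hsub : Tz.biUnion W ⊆ (A.filter fun b => e b = z) ×ˢ (A.filter fun b => e b = z) := by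
      intro p hp
      rw [Finset.mem_biUnion] at hp
      obtain ⟨t, htz, hpt⟩ := hp
      rw [Finset.mem_filter] at htz
      simp only [hW, Finset.mem_product, Finset.mem_filter] at hpt ⊢
      exact ⟨⟨hpt.1.1, by rw [← htz.2]; exact hpt.1.2.2⟩, ⟨hpt.2.1, by rw [← htz.2]; exact hpt.2.2.2⟩⟩
    calc ∑ t ∈ Tz, ((A.filter fun b => f b = t.1 ∧ e b = t.2.2).card) *
        ((A.filter fun b => g b = t.2.1 ∧ e b = t.2.2).card)
        = ∑ t ∈ Tz, (W t).card := by
          refine Finset.sum_congr rfl fun t ht => ?_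
          rw [hW]; exact (Finset.card_product _ _).symm
      _ = (Tz.biUnion W).card := (Finset.card_biUnion hdisj).symm
      _ ≤ _ := Finset.card_le_card hsub
      _ = _ := Finset.card_product _ _
  -- pass to reals and divide
  have hstep : ∑ t ∈ Tz, (((A.filter fun b => f b = t.1 ∧ e b = t.2.2).card : ℝ) *
      ((A.filter fun b => g b = t.2.1 ∧ e b = t.2.2).card : ℝ)) /
      ((A.filter fun b => e b = t.2.2).card : ℝ)
      = (∑ t ∈ Tz, (((A.filter fun b => f b = t.1 ∧ e b = t.2.2).card : ℝ) *
        ((A.filter fun b => g b = t.2.1 ∧ e b = t.2.2).card : ℝ))) /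
        ((A.filter fun b => e b = z).card : ℝ) := by
    rw [Finset.sum_div]
    refine Finset.sum_congr rfl fun t ht => ?_
    rw [Finset.mem_filter] at ht
    rw [ht.2]
  rw [hstep, div_le_iff₀ hz']
  exact_mod_cast hnat

/-- Supermodularity of `Φ` (equivalently, submodularity of entropy). -/
lemma phi_super (A : Finset α) :
    phi A (fun a => (f a, e a)) + phi A (fun a => (g a, e a)) ≤
      phi A (fun a => (f a, g a, e a)) + phi A e := by
  classical
  rcases A.eq_empty_or_nonempty with rfl | hA
  · simp [phi]
  have hfe : ∀ a ∈ A, ((A.filter fun b => f b = f a ∧ e b = e a).card)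
      = cnt A (fun b => (f b, e b)) a := by
    intro a _
    unfold cnt
    congr 1
    apply Finset.filter_congr
    intro b _
    simp [Prod.ext_iff]
  have hge : ∀ a ∈ A, ((A.filter fun b => g b = g a ∧ e b = e a).card)
      = cnt A (fun b => (g b, e b)) a := by
    intro a _
    unfold cnt
    congr 1
    apply Finset.filter_congr
    intro b _
    simp [Prod.ext_iff]
  -- the quotient function
  have hcnt_e : ∀ a : α, cnt A e a = (A.filter fun b => e b = e a).card := fun a => rfl
  set x : α → ℝ := fun a =>
    ((cnt A (fun b => (f b, e b)) a : ℝ) * (cnt A (fun b => (g b, e b)) a : ℝ)) /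
      ((cnt A (fun b => (f b, g b, e b)) a : ℝ) * (cnt A e a : ℝ)) with hx
  have hxpos : ∀ a ∈ A, 0 < x a := by
    intro a ha
    exact div_pos (mul_pos (cnt_cast_pos _ ha) (cnt_cast_pos _ ha)) (mul_pos (cnt_cast_pos _ ha) (cnt_cast_pos _ ha))
  -- Step A
  have hstepA : phi A (fun a => (f a, e a)) + phi A (fun a => (g a, e a)) -
      (phi A (fun a => (f a, g a, e a)) + phi A e) = ∑ a ∈ A, Real.log (x a) := by
    unfold phi
    rw [← Finset.sum_add_distrib, ← Finset.sum_add_distrib, ← Finset.sum_sub_distrib]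
    refine Finset.sum_congr rfl fun a ha => ?_
    have h1 := cnt_cast_pos (fun b => (f b, e b)) ha
    have h2 := cnt_cast_pos (fun b => (g b, e b)) ha
    have h3 := cnt_cast_pos (fun b => (f b, g b, e b)) ha
    have h4 := cnt_cast_pos e ha
    simp only [hx]
    rw [Real.log_div (mul_pos h1 h2).ne' (mul_pos h3 h4).ne',
      Real.log_mul h1.ne' h2.ne', Real.log_mul h3.ne' h4.ne']
  -- Step C
  set F : B × C × E → ℝ := fun t =>
    (((A.filter fun b => f b = t.1 ∧ e b = t.2.2).card : ℝ) *
      ((A.filter fun b => g b = t.2.1 ∧ e b = t.2.2).card : ℝ)) /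
      ((A.filter fun b => e b = t.2.2).card : ℝ) with hF
  have hsumx : ∑ a ∈ A, x a ≤ (A.card : ℝ) := by
    have hrw : ∀ a ∈ A, x a = F ((fun a => (f a, g a, e a)) a) /
        (cnt A (fun b => (f b, g b, e b)) a : ℝ) := by
      intro a ha
      show x a = (((A.filter fun b => f b = f a ∧ e b = e a).card : ℝ) *
            ((A.filter fun b => g b = g a ∧ e b = e a).card : ℝ)) /
            ((A.filter fun b => e b = e a).card : ℝ) /
            (cnt A (fun b => (f b, g b, e b)) a : ℝ)
      simp only [hx]
      rw [hfe a ha, hge a ha, ← hcnt_e a]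
      ring
    have h2 : ∑ a ∈ A, x a = ∑ t ∈ A.image (fun a => (f a, g a, e a)), F t := by
      rw [← sum_div_cnt (fun a => (f a, g a, e a)) F]
      exact Finset.sum_congr rfl hrw
    rw [h2, hF]
    exact sum_F_le f g e A
  -- Step B
  have hn : (0:ℝ) < (A.card : ℝ) := by exact_mod_cast Finset.card_pos.2 hA
  have hB : ∑ a ∈ A, Real.log (x a) ≤ (A.card : ℝ) *
      Real.log ((∑ a ∈ A, x a) / (A.card : ℝ)) := by
    have := sum_log_le A (fun _ => (1:ℝ)) x (fun _ _ => zero_le_one)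
      (fun a ha _ => hxpos a ha) (by simp [hn])
    simpa using this
  have hlog : Real.log ((∑ a ∈ A, x a) / (A.card : ℝ)) ≤ 0 := by
    apply Real.log_nonpos
    · positivity
    · rw [div_le_one hn]
      exact hsumx
  nlinarith [hstepA, hB, hlog, hn]

end Super

/-- Lower bound for `Φ` in terms of the number of distinct values. -/
lemma phi_ge {β : Type*} [DecidableEq β] (hA : A.Nonempty) (u : α → β) :
    (A.card : ℝ) * Real.log A.card - (A.card : ℝ) * Real.log ((A.image u).card) ≤
      phi A u := by
  classical
  have hmaps : ∀ a ∈ A, u a ∈ A.image u := fun a ha => Finset.mem_image_of_mem u ha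
  have hgroup : phi A u = ∑ t ∈ A.image u,
      ((A.filter fun b => u b = t).card : ℝ) *
        Real.log ((A.filter fun b => u b = t).card) := by
    unfold phi
    rw [← Finset.sum_fiberwise_of_maps_to hmaps (fun a => Real.log (cnt A u a))]
    refine Finset.sum_congr rfl fun t ht => ?_
    have : ∀ a ∈ A.filter (fun a => u a = t),
        Real.log (cnt A u a) = Real.log ((A.filter fun b => u b = t).card) := by
      intro a ha
      rw [Finset.mem_filter] at ha
      congr 2
      unfold cnt
      simp only [ha.2]
    rw [Finset.sum_congr rfl this, Finset.sum_const, nsmul_eq_mul]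
  have hnpos : ∀ t ∈ A.image u, (0:ℝ) < ((A.filter fun b => u b = t).card : ℝ) := by
    intro t ht
    rw [Finset.mem_image] at ht
    obtain ⟨a, ha, rfl⟩ := ht
    have := cnt_pos (u := u) ha
    unfold cnt at this
    exact_mod_cast this
  have hsumcard : ∑ t ∈ A.image u, ((A.filter fun b => u b = t).card : ℝ) = (A.card : ℝ) := by
    exact_mod_cast (congrArg Nat.cast (Finset.card_eq_sum_card_fiberwise hmaps)).symm
  have hn : (0:ℝ) < (A.card : ℝ) := by exact_mod_cast Finset.card_pos.2 hA
  have hm : (0:ℝ) < ((A.image u).card : ℝ) := by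
    exact_mod_cast Finset.card_pos.2 (hA.image u)
  have hjensen := sum_log_le (A.image u)
    (fun t => ((A.filter fun b => u b = t).card : ℝ))
    (fun t => (((A.filter fun b => u b = t).card : ℝ))⁻¹)
    (fun t _ => by positivity)
    (fun t ht _ => by
      have := hnpos t ht
      positivity)
    (by rw [hsumcard]; exact hn)
  rw [hsumcard] at hjensen
  have hxs : ∑ t ∈ A.image u, ((A.filter fun b => u b = t).card : ℝ) *
      (((A.filter fun b => u b = t).card : ℝ))⁻¹ = ((A.image u).card : ℝ) := by
    have h1 : ∀ t ∈ A.image u, ((A.filter fun b => u b = t).card : ℝ) *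
        (((A.filter fun b => u b = t).card : ℝ))⁻¹ = (1:ℝ) := fun t ht =>
      mul_inv_cancel₀ (hnpos t ht).ne'
    rw [Finset.sum_congr rfl h1, Finset.sum_const, nsmul_eq_mul, mul_one]
  rw [hxs] at hjensen
  have hlhs : ∑ t ∈ A.image u, ((A.filter fun b => u b = t).card : ℝ) *
      Real.log ((((A.filter fun b => u b = t).card : ℝ))⁻¹) = - phi A u := by
    rw [hgroup, ← Finset.sum_neg_distrib]
    refine Finset.sum_congr rfl fun t ht => ?_
    rw [Real.log_inv]
    ring
  rw [hlhs] at hjensen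
  have hlogdiv : Real.log (((A.image u).card : ℝ) / (A.card : ℝ)) =
      Real.log ((A.image u).card) - Real.log (A.card) := Real.log_div hm.ne' hn.ne'
  rw [hlogdiv] at hjensen
  nlinarith [hjensen]


section Psi
variable {V K : Type*} [Fintype V] [DecidableEq V] [DecidableEq K]

/-- Restriction of a coloring to a subset, as a total function. -/
def RS (S : Finset V) (φ : V → K) : V → Option K := fun v => if v ∈ S then some (φ v) else none

lemma RS_eq_iff {S : Finset V} {φ ψ : V → K} : RS S φ = RS S ψ ↔ ∀ v ∈ S, φ v = ψ v := by
  constructor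
  · intro h v hv
    have := congrFun h v
    simpa [RS, hv] using this
  · intro h
    funext v
    by_cases hv : v ∈ S
    · simp [RS, hv, h v hv]
    · simp [RS, hv]

noncomputable def psi (A : Finset (V → K)) (S : Finset V) : ℝ := phi A (RS S)

lemma psi_mono (A : Finset (V → K)) {S T : Finset V} (hST : S ⊆ T) : psi A T ≤ psi A S := by
  apply phi_mono
  intro a _ b _ h
  rw [RS_eq_iff] at h ⊢
  exact fun v hv => h v (hST hv)

lemma psi_cond (A : Finset (V → K)) {S T : Finset V} (hST : S ⊆ T) (i : V) :
    psi A T + psi A (insert i S) ≤ psi A (insert i T) + psi A S := by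
  have h1 : phi A (fun a => (RS T a, RS S a)) = psi A T := by
    apply phi_congr
    intro a _ b _
    constructor
    · intro h
      exact (Prod.ext_iff.1 h).1
    · intro h
      refine Prod.ext h ?_
      rw [RS_eq_iff] at h ⊢
      exact fun v hv => h v (hST hv)
  have h2 : phi A (fun a => (a i, RS S a)) = psi A (insert i S) := by
    apply phi_congr
    intro a _ b _
    rw [Prod.ext_iff, RS_eq_iff, RS_eq_iff]
    constructor
    · rintro ⟨h1', h2'⟩ v hv
      rcases Finset.mem_insert.1 hv with rfl | hv
      · exact h1'
      · exact h2' v hv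
    · intro h
      exact ⟨h i (Finset.mem_insert_self i S), fun v hv => h v (Finset.mem_insert_of_mem hv)⟩
  have h3 : phi A (fun a => (RS T a, a i, RS S a)) = psi A (insert i T) := by
    apply phi_congr
    intro a _ b _
    rw [Prod.ext_iff, Prod.ext_iff, RS_eq_iff, RS_eq_iff, RS_eq_iff]
    constructor
    · rintro ⟨hT, hi, _⟩ v hv
      rcases Finset.mem_insert.1 hv with rfl | hv
      · exact hi
      · exact hT v hv
    · intro h
      refine ⟨fun v hv => h v (Finset.mem_insert_of_mem hv),
        h i (Finset.mem_insert_self i T), fun v hv => h v (Finset.mem_insert_of_mem (hST hv))⟩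
  have := phi_super (RS T) (fun (a : V → K) => a i) (RS S) A
  rw [h1, h2, h3] at this
  exact this

/-- Shearer-type inequality, by induction on the ground set. -/
lemma shearer {ι : Type*} (A : Finset (V → K)) (J : Finset ι) (Sf : ι → Finset V) (r : ℕ)
    (U : Finset V) (hcov : ∀ v ∈ U, (r : ℕ) ≤ (J.filter (fun j => v ∈ Sf j)).card) :
    (r : ℝ) * (psi A ∅ - psi A U) ≤ ∑ j ∈ J, (psi A ∅ - psi A (Sf j ∩ U)) := by
  classical
  induction U using Finset.induction_on with
  | empty =>
    simp only [Finset.inter_empty, sub_self, mul_zero, Finset.sum_const_zero, le_refl]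
  | @insert v U hvU ih =>
    have hcovU : ∀ w ∈ U, (r : ℕ) ≤ (J.filter (fun j => w ∈ Sf j)).card :=
      fun w hw => hcov w (Finset.mem_insert_of_mem hw)
    have ihU := ih hcovU
    have hd : 0 ≤ psi A U - psi A (insert v U) := by
      have := psi_mono A (Finset.subset_insert v U)
      linarith
    set d := psi A U - psi A (insert v U) with hdd
    have key : ∀ j ∈ J, (psi A ∅ - psi A (Sf j ∩ U)) + (if v ∈ Sf j then d else 0) ≤
        psi A ∅ - psi A (Sf j ∩ insert v U) := by
      intro j _
      by_cases hvj : v ∈ Sf j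
      · have hinter : Sf j ∩ insert v U = insert v (Sf j ∩ U) :=
          Finset.inter_insert_of_mem hvj
        have hc := psi_cond A ((Finset.inter_subset_right : Sf j ∩ U ⊆ U)) v
        rw [hinter, if_pos hvj]
        simp only [hdd]
        linarith [hc]
      · have hinter : Sf j ∩ insert v U = Sf j ∩ U :=
          Finset.inter_insert_of_notMem hvj
        rw [hinter, if_neg hvj, add_zero]
    have hsumkey := Finset.sum_le_sum key
    rw [Finset.sum_add_distrib] at hsumkey
    have hite : ∑ j ∈ J, (if v ∈ Sf j then d else 0) =
        ((J.filter (fun j => v ∈ Sf j)).card : ℝ) * d := by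
      rw [← Finset.sum_filter, Finset.sum_const, nsmul_eq_mul]
    have hcard : (r : ℝ) ≤ ((J.filter (fun j => v ∈ Sf j)).card : ℝ) := by
      exact_mod_cast hcov v (Finset.mem_insert_self v U)
    have hrd : (r : ℝ) * d ≤ ((J.filter (fun j => v ∈ Sf j)).card : ℝ) * d :=
      mul_le_mul_of_nonneg_right hcard hd
    rw [hite] at hsumkey
    have : (r : ℝ) * (psi A ∅ - psi A (insert v U)) =
        (r : ℝ) * (psi A ∅ - psi A U) + (r : ℝ) * d := by
      simp only [hdd]; ring
    linarith

lemma psi_empty (A : Finset (V → K)) : psi A ∅ = (A.card : ℝ) * Real.log A.card := by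
  apply phi_of_const
  intro a _ b _
  funext v
  simp [RS]

lemma psi_univ (A : Finset (V → K)) : psi A Finset.univ = 0 := by
  apply phi_of_injOn
  intro a _ b _ h
  funext v
  exact RS_eq_iff.1 h v (Finset.mem_univ v)

end Psi
end ShearerAux

open ShearerAux in
/-- For an `r`-regular graph `G` on `n` vertices, the number of `𝓛`-legal (open)
neighborhood colorings of `G` is at most `N(r,𝓛)^(n/r)`. -/
theorem stmt2 {V K : Type*} [Fintype V] [Fintype K] (G : SimpleGraph V) [DecidableRel G.Adj]
    (r : ℕ) (hr : 1 ≤ r) (hreg : G.IsRegularOfDegree r) (𝓛 : Finset (Multiset K)) :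
    ({φ : V → K | ∀ v : V, (G.neighborFinset v).val.map φ ∈ 𝓛}.ncard : ℝ) ≤
      (({f : Fin r → K | Finset.univ.val.map f ∈ 𝓛}.ncard : ℝ)) ^
        ((Fintype.card V : ℝ) / r) := by
  classical
  set A : Finset (V → K) :=
    Finset.univ.filter (fun φ => ∀ v : V, (G.neighborFinset v).val.map φ ∈ 𝓛) with hA
  have hAcard : {φ : V → K | ∀ v : V, (G.neighborFinset v).val.map φ ∈ 𝓛}.ncard = A.card := by
    rw [← Set.ncard_coe_finset]
    congr 1
    ext φ
    simp [hA]
  set NF : Finset (Fin r → K) :=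
    Finset.univ.filter (fun f => Finset.univ.val.map f ∈ 𝓛) with hNF
  have hNcard : {f : Fin r → K | Finset.univ.val.map f ∈ 𝓛}.ncard = NF.card := by
    rw [← Set.ncard_coe_finset]
    congr 1
    ext f
    simp [hNF]
  rw [hAcard, hNcard]
  rcases isEmpty_or_nonempty V with hV | hV
  · have h0 : (Fintype.card V : ℝ) = 0 := by simp
    rw [h0, zero_div, Real.rpow_zero]
    have h1 : A.card ≤ 1 := Finset.card_le_one.2 (fun a _ b _ => funext fun v => isEmptyElim v)
    exact_mod_cast h1
  rcases A.eq_empty_or_nonempty with hAe | hAne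
  · rw [hAe]
    simp only [Finset.card_empty, Nat.cast_zero]
    exact Real.rpow_nonneg (Nat.cast_nonneg _) _
  -- main case
  set eqv : (v : V) → {x // x ∈ G.neighborFinset v} ≃ Fin r :=
    fun v => Finset.equivFinOfCardEq (hreg v) with heqv
  set g : V → (V → K) → (Fin r → K) := fun v φ i => φ ((eqv v).symm i : V) with hg
  have hmult : ∀ (v : V) (φ : V → K),
      Multiset.map (g v φ) Finset.univ.val = (G.neighborFinset v).val.map φ := by
    intro v φ
    have h1 : (Finset.univ : Finset (Fin r)) = Finset.univ.map (eqv v).toEmbedding :=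
      (Finset.map_univ_equiv (eqv v)).symm
    rw [h1, Finset.map_val, Multiset.map_map]
    simp only [Equiv.coe_toEmbedding]
    have h2 : (g v φ ∘ (eqv v)) = (φ ∘ Subtype.val) := by
      funext i
      simp [hg]
    rw [h2, Finset.univ_eq_attach, Finset.attach_val, ← Multiset.map_map,
      Multiset.attach_map_val]
  have hfib : ∀ (v : V) (φ ψ : V → K),
      RS (G.neighborFinset v) φ = RS (G.neighborFinset v) ψ ↔ g v φ = g v ψ := by
    intro v φ ψ
    rw [RS_eq_iff]
    constructor
    · intro h
      funext i
      exact h ((eqv v).symm i : V) ((eqv v).symm i).2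
    · intro h v' hv'
      have := congrFun h ((eqv v) ⟨v', hv'⟩)
      simpa [hg] using this
  have hpsiN : ∀ v : V, psi A (G.neighborFinset v) = phi A (g v) := by
    intro v
    apply phi_congr
    intro a _ b _
    exact hfib v b a
  have himage : ∀ v : V, A.image (g v) ⊆ NF := by
    intro v x hx
    rw [Finset.mem_image] at hx
    obtain ⟨φ, hφ, rfl⟩ := hx
    rw [hA, Finset.mem_filter] at hφ
    rw [hNF, Finset.mem_filter]
    exact ⟨Finset.mem_univ _, by rw [hmult v φ]; exact hφ.2 v⟩
  have hn : (0:ℝ) < (A.card : ℝ) := by exact_mod_cast Finset.card_pos.2 hAne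
  obtain ⟨v₀⟩ := hV
  have hNFpos : 0 < NF.card :=
    Finset.card_pos.2 (((hAne.image (g v₀)).mono (le_refl _)).mono (himage v₀))
  have hNFposR : (0:ℝ) < (NF.card : ℝ) := by exact_mod_cast hNFpos
  -- per-vertex bound
  have hper : ∀ v : V, (A.card : ℝ) * Real.log A.card -
      (A.card : ℝ) * Real.log NF.card ≤ psi A (G.neighborFinset v) := by
    intro v
    rw [hpsiN v]
    refine le_trans ?_ (phi_ge hAne (g v))
    have him : ((A.image (g v)).card : ℝ) ≤ (NF.card : ℝ) := by
      exact_mod_cast Finset.card_le_card (himage v)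
    have himpos : (0:ℝ) < ((A.image (g v)).card : ℝ) := by
      exact_mod_cast Finset.card_pos.2 (hAne.image (g v))
    have := Real.log_le_log himpos him
    nlinarith [hn]
  -- coverage
  have hcov : ∀ v ∈ (Finset.univ : Finset V),
      r ≤ ((Finset.univ : Finset V).filter (fun j => v ∈ G.neighborFinset j)).card := by
    intro v _
    have : ((Finset.univ : Finset V).filter (fun j => v ∈ G.neighborFinset j)) =
        G.neighborFinset v := by
      ext j
      simp [SimpleGraph.mem_neighborFinset, SimpleGraph.adj_comm]
    rw [this]
    exact (hreg v).ge
  have hshear := shearer A (Finset.univ : Finset V) (fun v => G.neighborFinset v) r Finset.univ hcov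
  simp only [Finset.inter_univ] at hshear
  rw [psi_empty, psi_univ] at hshear
  have hsum : ∑ v : V, ((A.card : ℝ) * Real.log A.card - psi A (G.neighborFinset v)) ≤
      ∑ v : V, (A.card : ℝ) * Real.log NF.card := by
    refine Finset.sum_le_sum fun v _ => ?_
    have := hper v
    linarith
  rw [Finset.sum_const, Finset.card_univ, nsmul_eq_mul] at hsum
  have hmain : (r : ℝ) * ((A.card : ℝ) * Real.log A.card) ≤
      (Fintype.card V : ℝ) * ((A.card : ℝ) * Real.log NF.card) := by
    calc (r : ℝ) * ((A.card : ℝ) * Real.log A.card)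
        = (r : ℝ) * ((A.card : ℝ) * Real.log A.card - 0) := by ring
      _ ≤ ∑ v : V, ((A.card : ℝ) * Real.log A.card - psi A (G.neighborFinset v)) := hshear
      _ ≤ (Fintype.card V : ℝ) * ((A.card : ℝ) * Real.log NF.card) := hsum
  have hrpos : (0:ℝ) < (r : ℝ) := by exact_mod_cast hr
  have hlog : Real.log A.card ≤ Real.log NF.card * ((Fintype.card V : ℝ) / r) := by
    have h1 : (r : ℝ) * Real.log A.card ≤ (Fintype.card V : ℝ) * Real.log NF.card := by
      have := hmain
      nlinarith [hn]
    rw [mul_comm (Real.log (NF.card:ℝ))]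
    rw [div_mul_eq_mul_div, le_div_iff₀ hrpos, mul_comm (Real.log (A.card:ℝ))]
    linarith [h1]
  calc (A.card : ℝ) = Real.exp (Real.log A.card) := (Real.exp_log hn).symm
    _ ≤ Real.exp (Real.log NF.card * ((Fintype.card V : ℝ) / r)) := Real.exp_le_exp.2 hlog
    _ = (NF.card : ℝ) ^ ((Fintype.card V : ℝ) / r) := (Real.rpow_def_of_pos hNFposR _).symm
end

section
/- If G is an r-regular graph on n vertices, 𝓛 a coloring condition over finite color set K, and λ: K → (0,∞), then the total λ-weight of all 𝓛-legal closed neighborhood colorings of G is at most N^λ(r+1,𝓛)^(n/(r+1)), where N^λ(s,𝓛) = Σ_{f:[s]→K, f([s])∈𝓛} ∏ λ(f(i)). -/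
open Finset
open scoped ENNReal

namespace Stmt5Aux


variable {V K : Type*} [Fintype V] [DecidableEq V] [Fintype K] [DecidableEq K]

/-- functions agreeing with `ψ` outside `C`. -/
def Phi (C : Finset V) (ψ : V → K) : Finset (V → K) :=
  univ.filter (fun φ => ∀ u, u ∉ C → φ u = ψ u)

lemma Phi_empty (ψ : V → K) : Phi (∅ : Finset V) ψ = {ψ} := by
  ext φ; simp [Phi, funext_iff]

lemma Phi_univ (ψ : V → K) : Phi (univ : Finset V) ψ = univ := by
  ext φ; simp [Phi]

lemma mem_Phi {C : Finset V} {ψ φ : V → K} : φ ∈ Phi C ψ ↔ ∀ u, u ∉ C → φ u = ψ u := by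
  simp [Phi]

lemma sum_Phi {M : Type*} [AddCommMonoid M] {C : Finset V} {u : V} (hu : u ∈ C) (ψ : V → K)
    (F : (V → K) → M) :
    ∑ φ ∈ Phi C ψ, F φ = ∑ x : K, ∑ φ ∈ Phi (C.erase u) ψ, F (Function.update φ u x) := by
  rw [← Finset.sum_product']
  refine Finset.sum_bij' (fun φ _ => ((φ u, Function.update φ u (ψ u)) : K × (V → K)))
    (fun p _ => Function.update p.2 u p.1) ?_ ?_ ?_ ?_ ?_
  · intro φ hφ
    rw [mem_Phi] at hφ
    refine Finset.mem_product.2 ⟨mem_univ _, mem_Phi.2 fun w hw => ?_⟩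
    show Function.update φ u (ψ u) w = ψ w
    rcases eq_or_ne w u with rfl | hne
    · simp
    · rw [Function.update_of_ne hne]
      exact hφ w (fun hwC => hw (Finset.mem_erase.2 ⟨hne, hwC⟩))
  · intro p hp
    have hp2 := (Finset.mem_product.1 hp).2
    rw [mem_Phi] at hp2
    refine mem_Phi.2 fun w hw => ?_
    show Function.update p.2 u p.1 w = ψ w
    rcases eq_or_ne w u with rfl | hne
    · exact absurd hu hw
    · rw [Function.update_of_ne hne]
      exact hp2 w (fun hwC => hw (Finset.mem_of_mem_erase hwC))
  · intro φ hφ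
    simp [Function.update_idem, Function.update_eq_self]
  · intro p hp
    have hp2 := (Finset.mem_product.1 hp).2
    rw [mem_Phi] at hp2
    have hpu : p.2 u = ψ u := hp2 u (Finset.notMem_erase u C)
    show (Function.update p.2 u p.1 u, Function.update (Function.update p.2 u p.1) u (ψ u)) = p
    rw [Function.update_idem, Function.update_self, ← hpu, Function.update_eq_self]
  · intro φ hφ
    simp




lemma prod_rpow_ennreal {ι : Type*} (s : Finset ι) (F : ι → ℝ≥0∞) {e : ℝ} (he : 0 ≤ e) :
    (∏ i ∈ s, F i) ^ e = ∏ i ∈ s, F i ^ e := by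
  classical
  induction s using Finset.induction with
  | empty => simp [ENNReal.one_rpow]
  | insert _ _ hni ih => rw [Finset.prod_insert hni, Finset.prod_insert hni,
      ENNReal.mul_rpow_of_nonneg _ _ he, ih]

lemma holder_sum {K ι : Type*} [Fintype K] (s : Finset ι) (F : ι → K → ℝ≥0∞) (w : ι → ℝ)
    (hw : ∀ i ∈ s, 0 ≤ w i) (hw1 : ∑ i ∈ s, w i = 1) :
    ∑ x : K, ∏ i ∈ s, F i x ^ w i ≤ ∏ i ∈ s, (∑ x : K, F i x) ^ w i := by
  letI : MeasurableSpace K := ⊤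
  have h := ENNReal.lintegral_prod_norm_pow_le (μ := (MeasureTheory.Measure.count : MeasureTheory.Measure K))
    s (f := fun i x => F i x) (fun i _ => (measurable_from_top (f := F i)).aemeasurable) hw1 hw
  simpa [MeasureTheory.lintegral_count, tsum_fintype] using h


lemma finner {ι : Type*} [Fintype ι] (p : ℕ) (hp : 0 < p)
    (S : ι → Finset V) (hcover : ∀ u : V, (univ.filter fun i => u ∈ S i).card = p)
    (A : Finset V) :
    ∀ (f : ι → (V → K) → ℝ≥0∞),
      (∀ i φ φ', (∀ u ∈ S i, φ u = φ' u) → f i φ = f i φ') → ∀ ψ : V → K,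
      ∑ φ ∈ Phi A ψ, ∏ i, f i φ ≤
        ∏ i, (∑ φ ∈ Phi (S i ∩ A) ψ, f i φ ^ (p : ℝ)) ^ (p : ℝ)⁻¹ := by
  have hpR : (0:ℝ) < (p:ℝ) := by exact_mod_cast hp
  induction A using Finset.strongInduction with
  | _ A ih =>
  intro f hdep ψ
  rcases A.eq_empty_or_nonempty with rfl | ⟨u, hu⟩
  · rw [Phi_empty, Finset.sum_singleton]
    apply le_of_eq
    refine Finset.prod_congr rfl fun i _ => ?_
    rw [Finset.inter_empty, Phi_empty, Finset.sum_singleton, ← ENNReal.rpow_mul,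
      mul_inv_cancel₀ hpR.ne', ENNReal.rpow_one]
  · -- inductive step
    classical
    set T : Finset ι := univ.filter (fun i => u ∈ S i) with hT
    have hTcard : T.card = p := hcover u
    set g : ι → (V → K) → ℝ≥0∞ := fun i φ =>
      if u ∈ S i then (∑ x : K, f i (Function.update φ u x) ^ (p : ℝ)) ^ (p : ℝ)⁻¹ else f i φ
      with hg
    have hupd : ∀ (i : ι), u ∉ S i → ∀ (φ : V → K) (x : K),
        f i (Function.update φ u x) = f i φ := by
      intro i hi φ x
      apply hdep
      intro w hw
      have hne : w ≠ u := fun h => hi (h ▸ hw)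
      exact Function.update_of_ne hne _ _
    have hgdep : ∀ i φ φ', (∀ w ∈ S i, φ w = φ' w) → g i φ = g i φ' := by
      intro i φ φ' hagree
      by_cases hi : u ∈ S i
      · simp only [hg, if_pos hi]
        congr 1
        refine Finset.sum_congr rfl fun x _ => ?_
        congr 1
        apply hdep
        intro w hw
        rcases eq_or_ne w u with rfl | hne
        · simp
        · rw [Function.update_of_ne hne, Function.update_of_ne hne]
          exact hagree w hw
      · simp only [hg, if_neg hi]
        exact hdep i _ _ hagree
    have step1 : ∑ φ ∈ Phi A ψ, ∏ i, f i φ ≤ ∑ φ ∈ Phi (A.erase u) ψ, ∏ i, g i φ := by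
      rw [sum_Phi hu ψ, Finset.sum_comm]
      refine Finset.sum_le_sum fun φ hφ => ?_
      have hsplit : ∀ x : K, ∏ i, f i (Function.update φ u x) =
          (∏ i ∈ T, f i (Function.update φ u x)) * ∏ i ∈ univ.filter (fun i => ¬ u ∈ S i), f i φ := by
        intro x
        rw [← Finset.prod_filter_mul_prod_filter_not univ (fun i => u ∈ S i)]
        congr 1
        exact Finset.prod_congr rfl fun i hi => hupd i (Finset.mem_filter.1 hi).2 φ x
      calc ∑ x : K, ∏ i, f i (Function.update φ u x)
          = (∑ x : K, ∏ i ∈ T, f i (Function.update φ u x)) *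
              ∏ i ∈ univ.filter (fun i => ¬ u ∈ S i), f i φ := by
            rw [Finset.sum_mul]; exact Finset.sum_congr rfl fun x _ => hsplit x
        _ ≤ (∏ i ∈ T, g i φ) * ∏ i ∈ univ.filter (fun i => ¬ u ∈ S i), f i φ := by
            refine mul_le_mul_left ?_ _
            have hh := holder_sum T (fun i x => f i (Function.update φ u x) ^ (p : ℝ))
              (fun _ => (p : ℝ)⁻¹) (fun _ _ => by positivity)
              (by rw [Finset.sum_const, hTcard, nsmul_eq_mul, mul_inv_cancel₀ hpR.ne'])
            calc ∑ x : K, ∏ i ∈ T, f i (Function.update φ u x)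
                = ∑ x : K, ∏ i ∈ T, (f i (Function.update φ u x) ^ (p:ℝ)) ^ (p:ℝ)⁻¹ := by
                  refine Finset.sum_congr rfl fun x _ => Finset.prod_congr rfl fun i _ => ?_
                  rw [← ENNReal.rpow_mul, mul_inv_cancel₀ hpR.ne', ENNReal.rpow_one]
              _ ≤ ∏ i ∈ T, (∑ x : K, f i (Function.update φ u x) ^ (p:ℝ)) ^ (p:ℝ)⁻¹ := hh
              _ = ∏ i ∈ T, g i φ := by
                  refine Finset.prod_congr rfl fun i hi => ?_
                  rw [hg]
                  simp only [if_pos (Finset.mem_filter.1 hi).2]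
        _ = ∏ i, g i φ := by
            rw [← Finset.prod_filter_mul_prod_filter_not univ (fun i => u ∈ S i)]
            congr 1
            refine Finset.prod_congr rfl fun i hi => ?_
            rw [hg]; simp only [if_neg (Finset.mem_filter.1 hi).2]
    have step2 := ih (A.erase u) (Finset.erase_ssubset hu) g hgdep ψ
    have step3 : ∀ i, (∑ φ ∈ Phi (S i ∩ A.erase u) ψ, g i φ ^ (p : ℝ)) =
        ∑ φ ∈ Phi (S i ∩ A) ψ, f i φ ^ (p : ℝ) := by
      intro i
      by_cases hi : u ∈ S i
      · have h1 : S i ∩ A.erase u = (S i ∩ A).erase u := by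
          ext w; simp only [Finset.mem_inter, Finset.mem_erase]; tauto
        have h2 : u ∈ S i ∩ A := Finset.mem_inter.2 ⟨hi, hu⟩
        rw [h1, sum_Phi (C := (S i ∩ A).erase u |> fun _ => S i ∩ A) h2 ψ
          (fun φ => f i φ ^ (p : ℝ)), Finset.sum_comm]
        refine Finset.sum_congr rfl fun φ _ => ?_
        rw [hg]
        simp only [if_pos hi]
        rw [← ENNReal.rpow_mul, inv_mul_cancel₀ hpR.ne', ENNReal.rpow_one]
      · have h1 : S i ∩ A.erase u = S i ∩ A := by
          ext w; simp only [Finset.mem_inter, Finset.mem_erase]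
          refine ⟨fun h => ⟨h.1, h.2.2⟩, fun h => ⟨h.1, fun hw => hi (hw ▸ h.1), h.2⟩⟩
        rw [h1]
        refine Finset.sum_congr rfl fun φ _ => ?_
        rw [hg]; simp only [if_neg hi]
    refine step1.trans (step2.trans (le_of_eq (Finset.prod_congr rfl fun i _ => ?_)))
    rw [step3 i]


end Stmt5Aux


open Stmt5Aux

/-- Weighted version: the total weight of all `𝓛`-legal closed neighborhood colorings of
an `r`-regular graph `G` on `n` vertices is at most `N^λ(r+1,𝓛)^(n/(r+1))`. -/
theorem stmt5 {V K : Type*} [Fintype V] [DecidableEq V] [Fintype K] [DecidableEq K] (G : SimpleGraph V)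
    [DecidableRel G.Adj] (r : ℕ) (hreg : G.IsRegularOfDegree r)
    (𝓛 : Finset (Multiset K)) (lam : K → ℝ) (hlam : ∀ x, 0 < lam x) :
    (∑ φ ∈ Finset.univ.filter
        (fun φ : V → K => ∀ v : V, φ v ::ₘ (G.neighborFinset v).val.map φ ∈ 𝓛),
        ∏ v : V, lam (φ v)) ≤
      (∑ f ∈ Finset.univ.filter (fun f : Fin (r + 1) → K => Finset.univ.val.map f ∈ 𝓛),
        ∏ i : Fin (r + 1), lam (f i)) ^ ((Fintype.card V : ℝ) / (r + 1)) := by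
  classical
  -- notation
  set p : ℕ := r + 1 with hp
  have hppos : 0 < p := Nat.succ_pos r
  have hpR : (0:ℝ) < (p:ℝ) := by exact_mod_cast hppos
  set B : ℝ := ∑ f ∈ Finset.univ.filter (fun f : Fin (r + 1) → K => Finset.univ.val.map f ∈ 𝓛),
      ∏ i : Fin (r + 1), lam (f i) with hB
  have hBnonneg : 0 ≤ B :=
    Finset.sum_nonneg fun f _ => Finset.prod_nonneg fun i _ => (hlam _).le
  have hexp : (0:ℝ) ≤ (Fintype.card V : ℝ) / (r + 1) := by positivity
  rcases isEmpty_or_nonempty (V → K) with hVK | hVK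
  · rw [Finset.sum_eq_zero (fun φ hφ => (hVK.false φ).elim)]
    positivity
  set ψ : V → K := Classical.arbitrary _ with hψ
  set L : K → ℝ≥0∞ := fun k => ENNReal.ofReal (lam k) with hL
  set S : V → Finset V := fun v => insert v (G.neighborFinset v) with hS
  have hvnb : ∀ v : V, v ∉ G.neighborFinset v := by
    intro v
    simp [SimpleGraph.mem_neighborFinset]
  have hScard : ∀ v, (S v).card = p := by
    intro v
    show (insert v (G.neighborFinset v)).card = p
    rw [Finset.card_insert_of_notMem (hvnb v)]
    show G.degree v + 1 = p
    rw [hreg v]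
  have hmemS : ∀ u v : V, u ∈ S v ↔ v ∈ S u := by
    intro u v
    simp only [hS, Finset.mem_insert, SimpleGraph.mem_neighborFinset]
    constructor
    · rintro (rfl | h)
      · exact Or.inl rfl
      · exact Or.inr h.symm
    · rintro (rfl | h)
      · exact Or.inl rfl
      · exact Or.inr h.symm
  have hcover : ∀ u : V, (univ.filter fun v => u ∈ S v).card = p := by
    intro u
    have : (univ.filter fun v => u ∈ S v) = S u := by
      ext w; simp only [Finset.mem_filter, Finset.mem_univ, true_and]; exact hmemS u w
    rw [this, hScard]
  -- the local weight functions
  set f : V → (V → K) → ℝ≥0∞ := fun v φ =>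
    (if Multiset.map φ (S v).val ∈ 𝓛 then 1 else 0) *
      (∏ u ∈ S v, L (φ u)) ^ (p : ℝ)⁻¹ with hf
  have hdep : ∀ v φ φ', (∀ u ∈ S v, φ u = φ' u) → f v φ = f v φ' := by
    intro v φ φ' h
    rw [hf]
    have h1 : Multiset.map φ (S v).val = Multiset.map φ' (S v).val :=
      Multiset.map_congr rfl fun u hu => h u hu
    have h2 : ∏ u ∈ S v, L (φ u) = ∏ u ∈ S v, L (φ' u) :=
      Finset.prod_congr rfl fun u hu => by rw [h u hu]
    simp only [h1, h2]
  -- apply the Finner-type inequality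
  have key := finner p hppos S hcover univ f hdep ψ
  rw [Phi_univ] at key
  -- identify the left-hand side
  have hlegal : ∀ φ : V → K, (∀ v, Multiset.map φ (S v).val ∈ 𝓛) ↔
      (∀ v : V, φ v ::ₘ (G.neighborFinset v).val.map φ ∈ 𝓛) := by
    intro φ
    refine forall_congr' fun v => ?_
    rw [show (S v).val = v ::ₘ (G.neighborFinset v).val from Finset.insert_val_of_notMem (hvnb v),
      Multiset.map_cons]
  have hprodf : ∀ φ : V → K, ∏ v, f v φ =
      (if (∀ v : V, φ v ::ₘ (G.neighborFinset v).val.map φ ∈ 𝓛) then 1 else 0) *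
        ∏ u : V, L (φ u) := by
    intro φ
    rw [hf, Finset.prod_mul_distrib, Finset.prod_boole]
    congr 1
    · simp only [Finset.mem_univ, true_implies]
      by_cases hcond : ∀ v : V, Multiset.map φ (S v).val ∈ 𝓛
      · rw [if_pos hcond, if_pos ((hlegal φ).1 hcond)]
      · rw [if_neg hcond, if_neg (fun h => hcond ((hlegal φ).2 h))]
    · rw [← prod_rpow_ennreal _ _ (by positivity : (0:ℝ) ≤ (p:ℝ)⁻¹)]
      have hcomm : ∏ v : V, ∏ u ∈ S v, L (φ u) = ∏ u : V, ∏ v ∈ S u, L (φ u) :=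
        Finset.prod_comm' (fun x y => by
          simp only [Finset.mem_univ, true_and, and_true]; exact (hmemS y x))
      rw [hcomm]
      have hconst : ∀ u : V, ∏ v ∈ S u, L (φ u) = L (φ u) ^ ((p:ℕ) : ℝ) := by
        intro u
        rw [Finset.prod_const, hScard u, ENNReal.rpow_natCast]
      rw [Finset.prod_congr rfl fun u _ => hconst u, ← prod_rpow_ennreal _ _
        (by positivity : (0:ℝ) ≤ ((p:ℕ):ℝ)), ← ENNReal.rpow_mul,
        mul_inv_cancel₀ hpR.ne', ENNReal.rpow_one]
  have hLHSnonneg : (0:ℝ) ≤ ∑ φ ∈ Finset.univ.filter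
      (fun φ : V → K => ∀ v : V, φ v ::ₘ (G.neighborFinset v).val.map φ ∈ 𝓛),
      ∏ v : V, lam (φ v) :=
    Finset.sum_nonneg fun φ _ => Finset.prod_nonneg fun v _ => (hlam _).le
  have hLHS : ∑ φ : V → K, ∏ v, f v φ =
      ENNReal.ofReal (∑ φ ∈ Finset.univ.filter
        (fun φ : V → K => ∀ v : V, φ v ::ₘ (G.neighborFinset v).val.map φ ∈ 𝓛),
        ∏ v : V, lam (φ v)) := by
    rw [ENNReal.ofReal_sum_of_nonneg
      (fun φ _ => Finset.prod_nonneg fun v _ => (hlam _).le), Finset.sum_filter]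
    refine Finset.sum_congr rfl fun φ _ => ?_
    rw [hprodf φ]
    by_cases hcond : ∀ v : V, φ v ::ₘ (G.neighborFinset v).val.map φ ∈ 𝓛
    · rw [if_pos hcond, if_pos hcond, one_mul,
        ENNReal.ofReal_prod_of_nonneg (fun v _ => (hlam _).le)]
    · rw [if_neg hcond, if_neg hcond, zero_mul]
  -- identify each right-hand factor
  have hfpow : ∀ (v : V) (φ : V → K), f v φ ^ (p : ℝ) =
      (if Multiset.map φ (S v).val ∈ 𝓛 then 1 else 0) * ∏ u ∈ S v, L (φ u) := by
    intro v φ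
    rw [hf, ENNReal.mul_rpow_of_nonneg _ _ hpR.le, ← ENNReal.rpow_mul,
      inv_mul_cancel₀ hpR.ne', ENNReal.rpow_one]
    congr 1
    by_cases hcond : Multiset.map φ (S v).val ∈ 𝓛
    · rw [if_pos hcond, ENNReal.one_rpow]
    · rw [if_neg hcond, ENNReal.zero_rpow_of_pos hpR]
  have hNval : ∀ v : V, (∑ φ ∈ Phi (S v ∩ univ) ψ, f v φ ^ (p : ℝ)) = ENNReal.ofReal B := by
    intro v
    have hcardSv : Fintype.card ↥(S v) = p := by rw [Fintype.card_coe, hScard v]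
    set e : Fin p ≃ ↥(S v) := (Fintype.equivFinOfCardEq hcardSv).symm with he
    have hmap : ∀ φ : V → K, Multiset.map φ (S v).val =
        Multiset.map (fun j : Fin p => φ ((e j : ↥(S v)) : V)) (univ : Finset (Fin p)).val := by
      intro φ
      have h1 : (univ : Finset ↥(S v)) = Finset.univ.map e.toEmbedding :=
        (Finset.univ_map_equiv_to_embedding e).symm
      have h2 : Multiset.map (fun j : Fin p => φ ((e j : ↥(S v)) : V))
          (univ : Finset (Fin p)).val
          = Multiset.map (fun w : ↥(S v) => φ (w : V)) (univ : Finset ↥(S v)).val := by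
        rw [h1, Finset.map_val, Multiset.map_map]
        rfl
      rw [h2, Finset.univ_eq_attach, Finset.attach_val]
      have h3 : Multiset.map (fun w : ↥(S v) => φ (w : V)) (S v).val.attach
          = Multiset.map φ (Multiset.map Subtype.val (S v).val.attach) :=
        (Multiset.map_map _ _ _).symm
      rw [h3, Multiset.attach_map_val]
    have hprod : ∀ φ : V → K, ∏ u ∈ S v, L (φ u) =
        ∏ j : Fin p, L (φ ((e j : ↥(S v)) : V)) := by
      intro φ
      rw [← Finset.prod_coe_sort (S v) (fun u => L (φ u))]
      exact (Equiv.prod_comp e fun w : ↥(S v) => L (φ (w : V))).symm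
    have hbij : (∑ φ ∈ Phi (S v ∩ univ) ψ, f v φ ^ (p : ℝ)) =
        ∑ h ∈ (univ : Finset (Fin p → K)),
          (if Multiset.map h (univ : Finset (Fin p)).val ∈ 𝓛 then 1 else 0) *
            ∏ j : Fin p, L (h j) := by
      rw [Finset.inter_univ]
      refine Finset.sum_bij' (fun φ _ => fun j : Fin p => φ ((e j : ↥(S v)) : V))
        (fun h _ => fun w : V => if hw : w ∈ S v then h (e.symm ⟨w, hw⟩) else ψ w)
        (fun φ _ => Finset.mem_univ _) ?_ ?_ ?_ ?_
      · intro h _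
        refine mem_Phi.2 fun w hw => ?_
        exact dif_neg hw
      · intro φ hφ
        funext w
        by_cases hw : w ∈ S v
        · simp only [dif_pos hw]
          congr 1
          have : e (e.symm ⟨w, hw⟩) = ⟨w, hw⟩ := e.apply_symm_apply _
          rw [this]
        · simp only [dif_neg hw]
          exact ((mem_Phi.1 hφ) w hw).symm
      · intro h _
        funext k
        have hk : ((e k : ↥(S v)) : V) ∈ S v := (e k).2
        simp only [dif_pos hk]
        congr 1
        rw [show (⟨((e k : ↥(S v)) : V), hk⟩ : ↥(S v)) = e k from Subtype.coe_eta _ _,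
          e.symm_apply_apply]
      · intro φ _
        rw [hfpow, hmap φ, hprod φ]
    rw [hbij, hB]
    rw [ENNReal.ofReal_sum_of_nonneg
      (fun h _ => Finset.prod_nonneg fun j _ => (hlam _).le), Finset.sum_filter]
    refine Finset.sum_congr rfl fun h _ => ?_
    by_cases hcond : Multiset.map h (univ : Finset (Fin p)).val ∈ 𝓛
    · rw [if_pos hcond, if_pos hcond, one_mul,
        ENNReal.ofReal_prod_of_nonneg (fun j _ => (hlam _).le)]
    · rw [if_neg hcond, if_neg hcond, zero_mul]
  -- put everything together in ℝ≥0∞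
  have hexp_eq : ((p:ℝ))⁻¹ * (Fintype.card V : ℝ) = (Fintype.card V : ℝ) / ((r:ℝ) + 1) := by
    rw [hp]
    push_cast
    ring
  have key2 : ENNReal.ofReal (∑ φ ∈ Finset.univ.filter
      (fun φ : V → K => ∀ v : V, φ v ::ₘ (G.neighborFinset v).val.map φ ∈ 𝓛),
      ∏ v : V, lam (φ v)) ≤
      (ENNReal.ofReal B) ^ ((Fintype.card V : ℝ) / ((r:ℝ) + 1)) := by
    rw [← hLHS, ← hexp_eq]
    refine key.trans (le_of_eq ?_)
    rw [Finset.prod_congr rfl fun v _ => by rw [hNval v], Finset.prod_const, Finset.card_univ,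
      ← ENNReal.rpow_natCast _ (Fintype.card V), ← ENNReal.rpow_mul]
  have hfin : (ENNReal.ofReal B) ^ ((Fintype.card V : ℝ) / ((r:ℝ) + 1)) ≠ ⊤ :=
    ENNReal.rpow_ne_top_of_nonneg hexp ENNReal.ofReal_ne_top
  have hfinal := ENNReal.toReal_mono hfin key2
  rw [ENNReal.toReal_ofReal hLHSnonneg, ← ENNReal.toReal_rpow,
    ENNReal.toReal_ofReal hBnonneg] at hfinal
  exact hfinal
end

section
/- If G is an r-regular graph on n vertices (r ≥ 1) and μ > 0, then the dominating set polynomial satisfies D_G(μ) ≤ D_{K_{r+1}}(μ)^(n/(r+1)), where D_{K_{r+1}}(μ) = (1+μ)^(r+1) - 1. -/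
open Finset MeasureTheory
open scoped NNReal ENNReal

/-- Two-point Hölder: for `k` functions on a two-point space. -/
lemma holder_two_point_ennreal {ι : Type*} (T : Finset ι) (k : ℕ) (hT : T.card = k)
    (hk : 0 < k) (w : ℝ≥0∞) (a b : ι → ℝ≥0∞) :
    (∏ i ∈ T, a i) + w * ∏ i ∈ T, b i ≤
      ∏ i ∈ T, (a i ^ k + w * b i ^ k) ^ ((k : ℝ)⁻¹) := by
  have hkR : (0:ℝ) < k := by exact_mod_cast hk
  have hsum : ∑ _i ∈ T, (k : ℝ)⁻¹ = 1 := by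
    rw [Finset.sum_const, hT, nsmul_eq_mul, mul_inv_cancel₀ hkR.ne']
  set f : ι → Bool → ℝ≥0∞ := fun i x => if x then a i ^ k else w * b i ^ k with hf
  have H := ENNReal.lintegral_prod_norm_pow_le (μ := Measure.count (α := Bool)) T
      (f := f) (fun i _ => (measurable_of_finite (f i)).aemeasurable)
      hsum (fun i _ => by positivity)
  have hpow : ∀ x : ℝ≥0∞, (x ^ k) ^ ((k:ℝ)⁻¹) = x := by
    intro x
    rw [← ENNReal.rpow_natCast x k, ← ENNReal.rpow_mul, mul_inv_cancel₀ hkR.ne',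
      ENNReal.rpow_one]
  have hlhs : ∫⁻ x, ∏ i ∈ T, f i x ^ ((k:ℝ)⁻¹) ∂(Measure.count) =
      w * (∏ i ∈ T, b i) + ∏ i ∈ T, a i := by
    rw [lintegral_count, tsum_bool]
    have h1 : ∏ i ∈ T, f i false ^ ((k:ℝ)⁻¹) = w * ∏ i ∈ T, b i := by
      simp only [hf, if_neg Bool.false_ne_true]
      calc ∏ i ∈ T, (w * b i ^ k) ^ ((k:ℝ)⁻¹)
          = ∏ i ∈ T, (w ^ ((k:ℝ)⁻¹) * b i) := by
            refine Finset.prod_congr rfl fun i _ => ?_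
            rw [ENNReal.mul_rpow_of_nonneg _ _ (by positivity), hpow]
        _ = w * ∏ i ∈ T, b i := by
            rw [Finset.prod_mul_distrib, Finset.prod_const, hT,
              ← ENNReal.rpow_natCast (w ^ _) k, ← ENNReal.rpow_mul,
              inv_mul_cancel₀ hkR.ne', ENNReal.rpow_one]
    have h2 : ∏ i ∈ T, f i true ^ ((k:ℝ)⁻¹) = ∏ i ∈ T, a i := by
      simp only [hf, if_pos trivial, if_true]
      exact Finset.prod_congr rfl fun i _ => hpow _
    rw [h1, h2]
  have hrhs : ∏ i ∈ T, (∫⁻ x, f i x ∂(Measure.count)) ^ ((k:ℝ)⁻¹) =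
      ∏ i ∈ T, (a i ^ k + w * b i ^ k) ^ ((k:ℝ)⁻¹) := by
    refine Finset.prod_congr rfl fun i _ => ?_
    rw [lintegral_count, tsum_bool]
    simp only [hf, if_neg Bool.false_ne_true, if_true]
    rw [add_comm]
  calc (∏ i ∈ T, a i) + w * ∏ i ∈ T, b i
      = ∫⁻ x, ∏ i ∈ T, f i x ^ ((k:ℝ)⁻¹) ∂(Measure.count) := by rw [hlhs, add_comm]
    _ ≤ ∏ i ∈ T, (∫⁻ x, f i x ∂(Measure.count)) ^ ((k:ℝ)⁻¹) := H
    _ = _ := hrhs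

lemma holder_two_point {ι : Type*} (T : Finset ι) (k : ℕ) (hT : T.card = k)
    (hk : 0 < k) (w : ℝ≥0) (a b : ι → ℝ≥0) :
    (∏ i ∈ T, a i) + w * ∏ i ∈ T, b i ≤
      ∏ i ∈ T, (a i ^ k + w * b i ^ k) ^ ((k : ℝ)⁻¹) := by
  have hkR : (0:ℝ) ≤ (k:ℝ)⁻¹ := by positivity
  have H := holder_two_point_ennreal T k hT hk (w : ℝ≥0∞)
    (fun i => (a i : ℝ≥0∞)) (fun i => (b i : ℝ≥0∞))
  rw [← ENNReal.coe_le_coe]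
  push_cast
  refine le_trans (le_of_eq ?_) (H.trans (le_of_eq ?_))
  · push_cast; rfl
  · refine Finset.prod_congr rfl fun i _ => ?_
    rw [← ENNReal.coe_pow, ← ENNReal.coe_pow, ← ENNReal.coe_mul, ← ENNReal.coe_add,
      ← ENNReal.coe_rpow_of_nonneg _ hkR]

/-- Sum of `μ^|S|` over the powerset. -/
lemma sum_powerset_pow_card {V : Type*} [DecidableEq V] (μ : ℝ≥0) (A : Finset V) :
    ∑ S ∈ A.powerset, μ ^ S.card = (1 + μ) ^ A.card := by
  induction A using Finset.induction with
  | empty => simp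
  | @insert a A ha ih =>
    rw [Finset.sum_powerset_insert ha]
    have h2 : ∑ S ∈ A.powerset, μ ^ (insert a S).card = μ * ∑ S ∈ A.powerset, μ ^ S.card := by
      rw [Finset.mul_sum]
      refine Finset.sum_congr rfl fun S hS => ?_
      rw [Finset.card_insert_of_notMem (fun h => ha (Finset.mem_powerset.mp hS h)),
        pow_succ, mul_comm]
    rw [h2, ih, Finset.card_insert_of_notMem ha, pow_succ]
    ring

/-- Discrete Finner inequality for an exact `k`-cover. -/
lemma finner {V ι : Type*} [DecidableEq V] [Fintype ι] (μ : ℝ≥0) (k : ℕ) (hk : 0 < k)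
    (U : Finset V) :
    ∀ (N : ι → Finset V), (∀ i, N i ⊆ U) →
      (∀ u ∈ U, (Finset.univ.filter fun i => u ∈ N i).card = k) →
      ∀ f : ι → Finset V → ℝ≥0, (∀ i S, f i (S ∩ N i) = f i S) →
      (∑ S ∈ U.powerset, μ ^ S.card * ∏ i, f i S) ^ k ≤
        ∏ i, ∑ S ∈ (N i).powerset, μ ^ S.card * f i S ^ k := by
  induction U using Finset.induction with
  | empty =>
    intro N hN _ f _
    have hNe : ∀ i, N i = ∅ := fun i => Finset.subset_empty.mp (hN i)
    simp only [Finset.powerset_empty, Finset.sum_singleton, Finset.card_empty, pow_zero,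
      one_mul, hNe]
    rw [← Finset.prod_pow]
  | @insert u s hu ih =>
    intro N hN hcov f hf
    have hTcard : (Finset.univ.filter fun i => u ∈ N i).card = k :=
      hcov u (Finset.mem_insert_self u s)
    set T := Finset.univ.filter fun i : ι => u ∈ N i with hT
    -- the new functions
    set g : ι → Finset V → ℝ≥0 := fun i S =>
      if u ∈ N i then
        (f i (S.erase u) ^ k + μ * f i (insert u (S.erase u)) ^ k) ^ ((k:ℝ)⁻¹)
      else f i S with hg
    -- facts about f for i with u ∉ N i
    have hfind : ∀ i, u ∉ N i → ∀ S, f i (insert u S) = f i S := by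
      intro i hi S
      rw [← hf i (insert u S), Finset.insert_inter_of_notMem hi, hf]
    -- step 1: rewrite the big sum
    have hsplit : ∑ S ∈ (insert u s).powerset, μ ^ S.card * ∏ i, f i S =
        ∑ S ∈ s.powerset, μ ^ S.card *
          ((∏ i, f i S) + μ * ∏ i, f i (insert u S)) := by
      rw [Finset.sum_powerset_insert hu, ← Finset.sum_add_distrib]
      refine Finset.sum_congr rfl fun S hS => ?_
      rw [Finset.card_insert_of_notMem (fun h => hu (Finset.mem_powerset.mp hS h)),
        pow_succ]
      ring
    -- step 2: pointwise Hölder bound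
    have hpoint : ∀ S ∈ s.powerset,
        (∏ i, f i S) + μ * ∏ i, f i (insert u S) ≤ ∏ i, g i S := by
      intro S hS
      have huS : u ∉ S := fun h => hu (Finset.mem_powerset.mp hS h)
      have heS : S.erase u = S := Finset.erase_eq_of_notMem huS
      have hps : ∀ h : ι → ℝ≥0, ∏ i, h i =
          (∏ i ∈ T, h i) * ∏ i ∈ Finset.univ.filter (fun i => ¬ u ∈ N i), h i := by
        intro h
        rw [hT, Finset.prod_filter_mul_prod_filter_not]
      have hP2 : ∏ i ∈ Finset.univ.filter (fun i => ¬ u ∈ N i), f i (insert u S) =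
          ∏ i ∈ Finset.univ.filter (fun i => ¬ u ∈ N i), f i S := by
        refine Finset.prod_congr rfl fun i hi => ?_
        exact hfind i (Finset.mem_filter.mp hi).2 S
      have hgT : ∀ i ∈ T, g i S = (f i S ^ k + μ * f i (insert u S) ^ k) ^ ((k:ℝ)⁻¹) := by
        intro i hi
        have : u ∈ N i := by
          rw [hT] at hi; exact (Finset.mem_filter.mp hi).2
        simp only [hg, if_pos this, heS]
      have hgnT : ∀ i ∈ Finset.univ.filter (fun i => ¬ u ∈ N i), g i S = f i S := by
        intro i hi
        simp only [hg, if_neg (Finset.mem_filter.mp hi).2]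
      rw [hps (fun i => f i S), hps (fun i => f i (insert u S)), hps (fun i => g i S),
        hP2, Finset.prod_congr rfl hgnT]
      have hH := holder_two_point T k hTcard hk μ (fun i => f i S) (fun i => f i (insert u S))
      calc (∏ i ∈ T, f i S) * (∏ i ∈ Finset.univ.filter (fun i => ¬ u ∈ N i), f i S)
            + μ * ((∏ i ∈ T, f i (insert u S)) *
              ∏ i ∈ Finset.univ.filter (fun i => ¬ u ∈ N i), f i S)
          = ((∏ i ∈ T, f i S) + μ * ∏ i ∈ T, f i (insert u S)) *
              ∏ i ∈ Finset.univ.filter (fun i => ¬ u ∈ N i), f i S := by ring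
        _ ≤ (∏ i ∈ T, (f i S ^ k + μ * f i (insert u S) ^ k) ^ ((k:ℝ)⁻¹)) *
              ∏ i ∈ Finset.univ.filter (fun i => ¬ u ∈ N i), f i S :=
            mul_le_mul_left hH _
        _ = _ := by rw [Finset.prod_congr rfl hgT]
    -- step 3: IH hypotheses
    have hN' : ∀ i, (N i).erase u ⊆ s := by
      intro i
      have := Finset.erase_subset_erase u (hN i)
      rwa [Finset.erase_insert hu] at this
    have hcov' : ∀ u' ∈ s, (Finset.univ.filter fun i => u' ∈ (N i).erase u).card = k := by
      intro u' hu'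
      have hne : u' ≠ u := fun h => hu (h ▸ hu')
      have : (Finset.univ.filter fun i => u' ∈ (N i).erase u) =
          (Finset.univ.filter fun i => u' ∈ N i) := by
        refine Finset.filter_congr fun i _ => ?_
        simp [Finset.mem_erase, hne]
      rw [this]
      exact hcov u' (Finset.mem_insert_of_mem hu')
    have hg' : ∀ i S, g i (S ∩ (N i).erase u) = g i S := by
      intro i S
      by_cases hi : u ∈ N i
      · have hkey : (S ∩ (N i).erase u).erase u = S ∩ (N i).erase u :=
          Finset.erase_eq_of_notMem
            (fun h => (Finset.mem_erase.mp (Finset.mem_inter.mp h).2).1 rfl)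
        have hseteq : S ∩ (N i).erase u = S.erase u ∩ N i :=
          (Finset.erase_inter_comm S (N i) u).symm
        simp only [hg, if_pos hi, hkey]
        congr 2
        · rw [hseteq, hf]
        · rw [← hf i (insert u (S.erase u)), Finset.insert_inter_of_mem hi, ← hseteq]
      · have : (N i).erase u = N i := Finset.erase_eq_of_notMem hi
        simp only [hg, if_neg hi, this, hf]
    -- step 4: per-factor identity
    have hfactor : ∀ i, ∑ S ∈ ((N i).erase u).powerset, μ ^ S.card * g i S ^ k =
        ∑ S ∈ (N i).powerset, μ ^ S.card * f i S ^ k := by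
      intro i
      by_cases hi : u ∈ N i
      · have hrw : ∀ S ∈ ((N i).erase u).powerset,
            μ ^ S.card * g i S ^ k =
              μ ^ S.card * f i S ^ k + μ ^ (insert u S).card * f i (insert u S) ^ k := by
          intro S hS
          have huS : u ∉ S := fun h => Finset.notMem_erase u (N i)
            (Finset.mem_powerset.mp hS h)
          have heS : S.erase u = S := Finset.erase_eq_of_notMem huS
          have hgk : g i S ^ k = f i S ^ k + μ * f i (insert u S) ^ k := by
            simp only [hg, if_pos hi, heS]
            rw [← NNReal.rpow_natCast (_ ^ ((k:ℝ)⁻¹)) k, ← NNReal.rpow_mul,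
              inv_mul_cancel₀ (by exact_mod_cast hk.ne' : (k:ℝ) ≠ 0), NNReal.rpow_one]
          rw [hgk, Finset.card_insert_of_notMem huS, pow_succ]
          ring
        rw [Finset.sum_congr rfl hrw, Finset.sum_add_distrib]
        conv_rhs => rw [← Finset.insert_erase hi,
          Finset.sum_powerset_insert (Finset.notMem_erase u (N i))]
      · have : (N i).erase u = N i := Finset.erase_eq_of_notMem hi
        rw [this]
        refine Finset.sum_congr rfl fun S _ => ?_
        simp only [hg, if_neg hi]
    -- put everything together
    calc (∑ S ∈ (insert u s).powerset, μ ^ S.card * ∏ i, f i S) ^ k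
        = (∑ S ∈ s.powerset, μ ^ S.card *
            ((∏ i, f i S) + μ * ∏ i, f i (insert u S))) ^ k := by rw [hsplit]
      _ ≤ (∑ S ∈ s.powerset, μ ^ S.card * ∏ i, g i S) ^ k := by
          refine pow_le_pow_left₀ zero_le (Finset.sum_le_sum fun S hS => ?_) k
          exact mul_le_mul_right (hpoint S hS) _
      _ ≤ ∏ i, ∑ S ∈ ((N i).erase u).powerset, μ ^ S.card * g i S ^ k :=
          ih (fun i => (N i).erase u) hN' hcov' g hg'
      _ = ∏ i, ∑ S ∈ (N i).powerset, μ ^ S.card * f i S ^ k :=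
          Finset.prod_congr rfl fun i _ => hfactor i

/-- For an `r`-regular graph `G` on `n` vertices and `μ > 0`, the dominating set polynomial
satisfies `D_G(μ) ≤ ((1+μ)^(r+1) - 1)^(n/(r+1))`. -/
theorem stmt6 {V : Type*} [Fintype V] [DecidableEq V] (G : SimpleGraph V) [DecidableRel G.Adj]
    (r : ℕ) (hr : 1 ≤ r) (hreg : G.IsRegularOfDegree r) (μ : ℝ) (hμ : 0 < μ) :
    (∑ S ∈ Finset.univ.filter (fun S : Finset V => ∀ v : V, ∃ u ∈ S, u = v ∨ G.Adj u v),
        μ ^ S.card) ≤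
      ((1 + μ) ^ (r + 1) - 1) ^ ((Fintype.card V : ℝ) / (r + 1)) := by
  classical
  set ν : ℝ≥0 := ⟨μ, hμ.le⟩ with hν
  set k : ℕ := r + 1 with hkdef
  have hk : 0 < k := Nat.succ_pos r
  set N : V → Finset V := fun v => insert v (G.neighborFinset v) with hNdef
  have hNcard : ∀ v, (N v).card = k := by
    intro v
    rw [hNdef]
    rw [Finset.card_insert_of_notMem (SimpleGraph.notMem_neighborFinset_self G v),
      SimpleGraph.card_neighborFinset_eq_degree, hreg v]
  have hmemN : ∀ u v : V, u ∈ N v ↔ u = v ∨ G.Adj u v := by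
    intro u v
    simp [hNdef, SimpleGraph.mem_neighborFinset, G.adj_comm]
  have hcov : ∀ u ∈ (Finset.univ : Finset V),
      (Finset.univ.filter fun v => u ∈ N v).card = k := by
    intro u _
    have : (Finset.univ.filter fun v => u ∈ N v) = N u := by
      ext v
      simp only [Finset.mem_filter, Finset.mem_univ, true_and]
      rw [hmemN u v, hmemN v u, eq_comm, G.adj_comm u v]
    rw [this, hNcard]
  set f : V → Finset V → ℝ≥0 := fun v S => if (S ∩ N v).Nonempty then 1 else 0 with hfdef
  have hf : ∀ v S, f v (S ∩ N v) = f v S := by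
    intro v S
    simp only [hfdef, Finset.inter_assoc, Finset.inter_self]
  have key := finner ν k hk (Finset.univ : Finset V) N (fun i => Finset.subset_univ _)
    hcov f hf
  -- compute the LHS of key
  have hprodf : ∀ S : Finset V,
      (∏ v, f v S) = if (∀ v : V, ∃ u ∈ S, u = v ∨ G.Adj u v) then 1 else 0 := by
    intro S
    by_cases hd : ∀ v : V, ∃ u ∈ S, u = v ∨ G.Adj u v
    · rw [if_pos hd]
      refine Finset.prod_eq_one fun v _ => ?_
      obtain ⟨u, huS, hu⟩ := hd v
      exact if_pos ⟨u, Finset.mem_inter.mpr ⟨huS, (hmemN u v).mpr hu⟩⟩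
    · rw [if_neg hd]
      push_neg at hd
      obtain ⟨v, hv⟩ := hd
      refine Finset.prod_eq_zero (Finset.mem_univ v) ?_
      refine if_neg fun ⟨u, hu⟩ => ?_
      obtain ⟨huS, huN⟩ := Finset.mem_inter.mp hu
      rcases (hmemN u v).mp huN with h | h
      · exact (hv u huS).1 h
      · exact (hv u huS).2 h
  have hlhs : (∑ S ∈ Finset.univ.powerset, ν ^ S.card * ∏ v, f v S) =
      ∑ S ∈ Finset.univ.filter (fun S : Finset V => ∀ v : V, ∃ u ∈ S, u = v ∨ G.Adj u v),
        ν ^ S.card := by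
    rw [Finset.powerset_univ, Finset.sum_filter]
    refine Finset.sum_congr rfl fun S _ => ?_
    rw [hprodf]
    by_cases hp : ∀ v : V, ∃ u ∈ S, u = v ∨ G.Adj u v <;> simp [hp]
  -- compute each RHS factor
  have hfactor : ∀ v, (∑ S ∈ (N v).powerset, ν ^ S.card * f v S ^ k) + 1 = (1 + ν) ^ k := by
    intro v
    have h1 : ∀ S ∈ (N v).powerset, ν ^ S.card * f v S ^ k =
        if S.Nonempty then ν ^ S.card else 0 := by
      intro S hS
      have : S ∩ N v = S := Finset.inter_eq_left.mpr (Finset.mem_powerset.mp hS)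
      simp only [hfdef, this]
      split
      · simp
      · simp [hk.ne']
    rw [Finset.sum_congr rfl h1,
      ← Finset.sum_erase_add _ _ (Finset.empty_mem_powerset (N v))]
    simp only [Finset.not_nonempty_empty, if_neg, Finset.card_empty, pow_zero, add_zero,
      reduceIte]
    have h2 : ∀ S ∈ (N v).powerset.erase ∅,
        (if S.Nonempty then ν ^ S.card else 0) = ν ^ S.card := by
      intro S hS
      exact if_pos (Finset.nonempty_iff_ne_empty.mpr (Finset.mem_erase.mp hS).1)
    rw [Finset.sum_congr rfl h2, ← hNcard v, ← sum_powerset_pow_card ν (N v),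
      ← Finset.sum_erase_add _ _ (Finset.empty_mem_powerset (N v))]
    simp
  -- pass to the reals
  set R : ℝ := (1 + μ) ^ k - 1 with hR
  have hRdef : ∀ v, ((∑ S ∈ (N v).powerset, ν ^ S.card * f v S ^ k : ℝ≥0) : ℝ) = R := by
    intro v
    have h := congrArg (fun x : ℝ≥0 => (x : ℝ)) (hfactor v)
    have hcν : (ν : ℝ) = μ := rfl
    push_cast at h ⊢
    rw [hcν] at h ⊢
    rw [hR]
    linarith
  set D : ℝ := ∑ S ∈ Finset.univ.filter
      (fun S : Finset V => ∀ v : V, ∃ u ∈ S, u = v ∨ G.Adj u v), μ ^ S.card with hD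
  have hDnn : 0 ≤ D := by
    rw [hD]
    exact Finset.sum_nonneg fun S _ => pow_nonneg hμ.le _
  have hRnn : 0 ≤ R := by
    rw [hR]
    have : (1:ℝ) ≤ (1 + μ) ^ k := one_le_pow₀ (by linarith)
    linarith
  have hcoe : ((∑ S ∈ Finset.univ.filter
      (fun S : Finset V => ∀ v : V, ∃ u ∈ S, u = v ∨ G.Adj u v), ν ^ S.card : ℝ≥0) : ℝ) = D := by
    rw [hD]
    push_cast
    rfl
  have hkey : D ^ k ≤ R ^ (Fintype.card V) := by
    rw [hlhs] at key
    have hrr : ((∏ v, ∑ S ∈ (N v).powerset, ν ^ S.card * f v S ^ k : ℝ≥0) : ℝ)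
        = R ^ (Fintype.card V) := by
      rw [NNReal.coe_prod, Finset.prod_congr rfl fun v _ => hRdef v, Finset.prod_const,
        Finset.card_univ]
    calc D ^ k = (((∑ S ∈ Finset.univ.filter
          (fun S : Finset V => ∀ v : V, ∃ u ∈ S, u = v ∨ G.Adj u v), ν ^ S.card : ℝ≥0) ^ k
            : ℝ≥0) : ℝ) := by
          rw [← hcoe]; push_cast; rfl
      _ ≤ ((∏ v, ∑ S ∈ (N v).powerset, ν ^ S.card * f v S ^ k : ℝ≥0) : ℝ) :=
          (NNReal.coe_le_coe).mpr key
      _ = R ^ (Fintype.card V) := hrr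
  -- final rpow manipulation
  have hkR : (0:ℝ) < k := by exact_mod_cast hk
  have hgoal : D ≤ R ^ ((Fintype.card V : ℝ) / k) := by
    calc D = (D ^ k) ^ ((k:ℝ)⁻¹) := by
          rw [← Real.rpow_natCast D k, ← Real.rpow_mul hDnn,
            mul_inv_cancel₀ hkR.ne', Real.rpow_one]
      _ ≤ (R ^ (Fintype.card V)) ^ ((k:ℝ)⁻¹) := by
          refine Real.rpow_le_rpow (by positivity) hkey (by positivity)
      _ = R ^ ((Fintype.card V : ℝ) / k) := by
          rw [← Real.rpow_natCast R (Fintype.card V), ← Real.rpow_mul hRnn,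
            div_eq_mul_inv]
  have hc : ((r:ℝ) + 1) = ((k : ℕ) : ℝ) := by rw [hkdef]; push_cast; ring
  rw [hc]
  exact hgoal
end

section
/- If G is an r-regular graph on n vertices (r ≥ 1) and μ > 0, then the strong dominating set polynomial satisfies D^s_G(μ) ≤ D^s_{K_{r,r}}(μ)^(n/(2r)), where D^s_{K_{r,r}}(μ) = ((1+μ)^r - 1)^2. -/
open Finset

/-- Hölder-type step: for `|A| = r` and nonnegative `a b`,
`∏ a + ∏ b ≤ ∏ (a^r + b^r)^(1/r)`. -/
lemma amgm_two_prod {V : Type*} (A : Finset V) (r : ℕ) (hr : r ≠ 0) (hA : A.card = r)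
    (a b : V → ℝ) (ha : ∀ v, 0 ≤ a v) (hb : ∀ v, 0 ≤ b v) :
    (∏ v ∈ A, a v) + (∏ v ∈ A, b v) ≤
      ∏ v ∈ A, (a v ^ r + b v ^ r) ^ ((r : ℝ)⁻¹) := by
  by_cases hz : ∃ v ∈ A, a v = 0 ∧ b v = 0
  · obtain ⟨v, hv, hav, hbv⟩ := hz
    rw [Finset.prod_eq_zero hv hav, Finset.prod_eq_zero hv hbv, add_zero]
    exact Finset.prod_nonneg fun w _ =>
      Real.rpow_nonneg (add_nonneg (pow_nonneg (ha w) r) (pow_nonneg (hb w) r)) _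
  push_neg at hz
  set c : V → ℝ := fun v => (a v ^ r + b v ^ r) ^ ((r : ℝ)⁻¹) with hc
  have hcpos : ∀ v ∈ A, 0 < c v := by
    intro v hv
    apply Real.rpow_pos_of_pos
    rcases eq_or_lt_of_le (ha v) with h | h
    · have hb' := hz v hv (h.symm)
      have hbpos : 0 < b v := lt_of_le_of_ne (hb v) (Ne.symm hb')
      exact add_pos_of_nonneg_of_pos (pow_nonneg (ha v) r) (pow_pos hbpos r)
    · exact add_pos_of_pos_of_nonneg (pow_pos h r) (pow_nonneg (hb v) r)
  have hcr : ∀ v ∈ A, c v ^ r = a v ^ r + b v ^ r := fun v hv =>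
    Real.rpow_inv_natCast_pow (add_nonneg (pow_nonneg (ha v) r) (pow_nonneg (hb v) r)) hr
  have key : (∏ v ∈ A, (a v / c v)) + (∏ v ∈ A, (b v / c v)) ≤ 1 := by
    have hsum : ∑ _v ∈ A, (r : ℝ)⁻¹ = 1 := by
      rw [Finset.sum_const, hA, nsmul_eq_mul]
      field_simp
    have h1 : ∏ v ∈ A, (a v / c v) ≤ ∑ v ∈ A, (r : ℝ)⁻¹ * (a v / c v) ^ r := by
      have := Real.geom_mean_le_arith_mean_weighted A (fun _ => (r : ℝ)⁻¹)
        (fun v => (a v / c v) ^ r) (fun _ _ => by positivity) hsum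
        (fun v hv => pow_nonneg (div_nonneg (ha v) (hcpos v hv).le) r)
      refine le_trans (le_of_eq ?_) this
      refine (Finset.prod_congr rfl fun v hv => ?_).symm
      exact Real.pow_rpow_inv_natCast (div_nonneg (ha v) (hcpos v hv).le) hr
    have h2 : ∏ v ∈ A, (b v / c v) ≤ ∑ v ∈ A, (r : ℝ)⁻¹ * (b v / c v) ^ r := by
      have := Real.geom_mean_le_arith_mean_weighted A (fun _ => (r : ℝ)⁻¹)
        (fun v => (b v / c v) ^ r) (fun _ _ => by positivity) hsum
        (fun v hv => pow_nonneg (div_nonneg (hb v) (hcpos v hv).le) r)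
      refine le_trans (le_of_eq ?_) this
      refine (Finset.prod_congr rfl fun v hv => ?_).symm
      exact Real.pow_rpow_inv_natCast (div_nonneg (hb v) (hcpos v hv).le) hr
    calc (∏ v ∈ A, (a v / c v)) + (∏ v ∈ A, (b v / c v))
        ≤ (∑ v ∈ A, (r : ℝ)⁻¹ * (a v / c v) ^ r) +
          (∑ v ∈ A, (r : ℝ)⁻¹ * (b v / c v) ^ r) := add_le_add h1 h2
      _ = ∑ v ∈ A, (r : ℝ)⁻¹ * ((a v ^ r + b v ^ r) / c v ^ r) := by
          rw [← Finset.sum_add_distrib]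
          refine Finset.sum_congr rfl fun v hv => ?_
          rw [div_pow, div_pow, ← mul_add, ← add_div]
      _ = ∑ v ∈ A, (r : ℝ)⁻¹ := by
          refine Finset.sum_congr rfl fun v hv => ?_
          rw [hcr v hv, div_self (by
            have := (hcpos v hv)
            rw [← hcr v hv]
            positivity), mul_one]
      _ = 1 := hsum
  have hprodc : 0 ≤ ∏ v ∈ A, c v := Finset.prod_nonneg fun v hv => (hcpos v hv).le
  have ha' : ∏ v ∈ A, a v = (∏ v ∈ A, (a v / c v)) * ∏ v ∈ A, c v := by
    rw [← Finset.prod_mul_distrib]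
    exact Finset.prod_congr rfl fun v hv => (div_mul_cancel₀ _ (hcpos v hv).ne').symm
  have hb' : ∏ v ∈ A, b v = (∏ v ∈ A, (b v / c v)) * ∏ v ∈ A, c v := by
    rw [← Finset.prod_mul_distrib]
    exact Finset.prod_congr rfl fun v hv => (div_mul_cancel₀ _ (hcpos v hv).ne').symm
  calc (∏ v ∈ A, a v) + (∏ v ∈ A, b v)
      = ((∏ v ∈ A, (a v / c v)) + (∏ v ∈ A, (b v / c v))) * ∏ v ∈ A, c v := by
        rw [ha', hb', add_mul]
    _ ≤ 1 * ∏ v ∈ A, c v := mul_le_mul_of_nonneg_right key hprodc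
    _ = ∏ v ∈ A, c v := one_mul _

/-- Finner-type inequality for an `r`-uniform cover by "neighborhoods". -/
lemma finner_ineq {V : Type*} [Fintype V] [DecidableEq V] (r : ℕ) (hr : r ≠ 0)
    (N : V → Finset V) (hcount : ∀ w : V, (Finset.univ.filter fun v => w ∈ N v).card = r)
    (U : Finset V) :
    ∀ (f : V → Finset V → ℝ), (∀ v S, 0 ≤ f v S) → (∀ v S, f v S = f v (S ∩ N v)) →
      ∑ S ∈ U.powerset, ∏ v, f v S ≤
        ∏ v, (∑ T ∈ (N v ∩ U).powerset, f v T ^ r) ^ ((r : ℝ)⁻¹) := by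
  induction U using Finset.induction_on with
  | empty =>
    intro f hf0 hdep
    simp only [Finset.inter_empty, Finset.powerset_empty, Finset.sum_singleton]
    exact le_of_eq (Finset.prod_congr rfl fun v _ =>
      (Real.pow_rpow_inv_natCast (hf0 v ∅) hr).symm)
  | @insert u U' hu IH =>
    intro f hf0 hdep
    set A : Finset V := Finset.univ.filter (fun v => u ∈ N v) with hAdef
    have hA : A.card = r := hcount u
    set g : V → Finset V → ℝ := fun v S =>
      if u ∈ N v then (f v S ^ r + f v (insert u S) ^ r) ^ ((r : ℝ)⁻¹) else f v S with hgdef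
    have hg0 : ∀ v S, 0 ≤ g v S := by
      intro v S
      simp only [hgdef]
      split
      · exact Real.rpow_nonneg
          (add_nonneg (pow_nonneg (hf0 v S) r) (pow_nonneg (hf0 v _) r)) _
      · exact hf0 v S
    have hins : ∀ v S, u ∈ N v → f v (insert u S) = f v (insert u (S ∩ N v)) := by
      intro v S huv
      rw [hdep v (insert u S), Finset.insert_inter_of_mem huv]
    have hgdep : ∀ v S, g v S = g v (S ∩ N v) := by
      intro v S
      by_cases huv : u ∈ N v
      · simp only [hgdef, if_pos huv]
        rw [← hdep v S, ← hins v S huv]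
      · simp only [hgdef, if_neg huv]
        exact hdep v S
    have pointwise : ∀ S : Finset V,
        (∏ v, f v S) + (∏ v, f v (insert u S)) ≤ ∏ v, g v S := by
      intro S
      have split1 : (∏ v, f v S) =
          (∏ v ∈ A, f v S) * ∏ v ∈ Finset.univ.filter (fun v => ¬ u ∈ N v), f v S := by
        rw [hAdef, Finset.prod_filter_mul_prod_filter_not]
      have hfins_eq : ∀ v ∈ Finset.univ.filter (fun v => ¬ u ∈ N v),
          f v (insert u S) = f v S := by
        intro v hv
        rw [Finset.mem_filter] at hv
        rw [hdep v (insert u S), Finset.insert_inter_of_notMem hv.2, ← hdep v S]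
      have split2 : (∏ v, f v (insert u S)) =
          (∏ v ∈ A, f v (insert u S)) *
            ∏ v ∈ Finset.univ.filter (fun v => ¬ u ∈ N v), f v S := by
        rw [← Finset.prod_congr rfl hfins_eq, hAdef,
          Finset.prod_filter_mul_prod_filter_not]
      have splitg : (∏ v, g v S) =
          (∏ v ∈ A, g v S) * ∏ v ∈ Finset.univ.filter (fun v => ¬ u ∈ N v), g v S := by
        rw [hAdef, Finset.prod_filter_mul_prod_filter_not]
      have hgA : ∀ v ∈ A, g v S = (f v S ^ r + f v (insert u S) ^ r) ^ ((r : ℝ)⁻¹) := by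
        intro v hv
        rw [hAdef, Finset.mem_filter] at hv
        simp only [hgdef, if_pos hv.2]
      have hgnA : ∀ v ∈ Finset.univ.filter (fun v => ¬ u ∈ N v), g v S = f v S := by
        intro v hv
        rw [Finset.mem_filter] at hv
        simp only [hgdef, if_neg hv.2]
      rw [split1, split2, splitg, ← add_mul, Finset.prod_congr rfl hgnA,
        Finset.prod_congr rfl hgA]
      refine mul_le_mul_of_nonneg_right ?_
        (Finset.prod_nonneg fun v _ => hf0 v S)
      exact amgm_two_prod A r hr hA _ _ (fun v => hf0 v S) (fun v => hf0 v _)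
    have sums_eq : ∀ v : V,
        ∑ T ∈ (N v ∩ U').powerset, g v T ^ r =
          ∑ T ∈ (N v ∩ insert u U').powerset, f v T ^ r := by
      intro v
      by_cases huv : u ∈ N v
      · have hset : N v ∩ insert u U' = insert u (N v ∩ U') := by
          rw [Finset.inter_comm, Finset.insert_inter_of_mem huv, Finset.inter_comm]
        have hu' : u ∉ N v ∩ U' := fun h => hu (Finset.mem_of_mem_inter_right h)
        rw [hset, Finset.sum_powerset_insert hu']
        rw [← Finset.sum_add_distrib]
        refine Finset.sum_congr rfl fun T hT => ?_
        simp only [hgdef, if_pos huv]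
        exact Real.rpow_inv_natCast_pow
          (add_nonneg (pow_nonneg (hf0 v T) r) (pow_nonneg (hf0 v _) r)) hr
      · have hset : N v ∩ insert u U' = N v ∩ U' := by
          rw [Finset.inter_comm, Finset.insert_inter_of_notMem huv, Finset.inter_comm]
        rw [hset]
        refine Finset.sum_congr rfl fun T hT => ?_
        simp only [hgdef, if_neg huv]
    calc ∑ S ∈ (insert u U').powerset, ∏ v, f v S
        = (∑ S ∈ U'.powerset, ∏ v, f v S) +
            ∑ S ∈ U'.powerset, ∏ v, f v (insert u S) :=
          Finset.sum_powerset_insert hu _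
      _ = ∑ S ∈ U'.powerset, ((∏ v, f v S) + ∏ v, f v (insert u S)) :=
          (Finset.sum_add_distrib).symm
      _ ≤ ∑ S ∈ U'.powerset, ∏ v, g v S :=
          Finset.sum_le_sum fun S _ => pointwise S
      _ ≤ ∏ v, (∑ T ∈ (N v ∩ U').powerset, g v T ^ r) ^ ((r : ℝ)⁻¹) := IH g hg0 hgdep
      _ = ∏ v, (∑ T ∈ (N v ∩ insert u U').powerset, f v T ^ r) ^ ((r : ℝ)⁻¹) := by
          exact Finset.prod_congr rfl fun v _ => by rw [sums_eq v]

/-- For an `r`-regular graph `G` on `n` vertices and `μ > 0`, the strong dominating set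
polynomial satisfies `D^s_G(μ) ≤ (((1+μ)^r - 1)^2)^(n/(2r))`. -/
theorem stmt7 {V : Type*} [Fintype V] [DecidableEq V] (G : SimpleGraph V) [DecidableRel G.Adj]
    (r : ℕ) (hr : 1 ≤ r) (hreg : G.IsRegularOfDegree r) (μ : ℝ) (hμ : 0 < μ) :
    (∑ S ∈ Finset.univ.filter (fun S : Finset V => ∀ v : V, ∃ u ∈ S, G.Adj u v),
        μ ^ S.card) ≤
      (((1 + μ) ^ r - 1) ^ 2) ^ ((Fintype.card V : ℝ) / (2 * r)) := by
  have hrne : r ≠ 0 := by omega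
  have hrR : (r : ℝ) ≠ 0 := Nat.cast_ne_zero.mpr hrne
  set N : V → Finset V := fun v => G.neighborFinset v with hN
  have hcount : ∀ w : V, (Finset.univ.filter fun v => w ∈ N v).card = r := by
    intro w
    have : (Finset.univ.filter fun v => w ∈ N v) = N w := by
      ext v
      simp [hN, SimpleGraph.adj_comm]
    rw [this]
    exact hreg w
  set f : V → Finset V → ℝ := fun v S =>
    if (S ∩ N v).Nonempty then (μ ^ (S ∩ N v).card) ^ ((r : ℝ)⁻¹) else 0 with hf
  have hf0 : ∀ v S, 0 ≤ f v S := by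
    intro v S
    simp only [hf]
    split
    · exact Real.rpow_nonneg (pow_nonneg hμ.le _) _
    · exact le_rfl
  have hdep : ∀ v S, f v S = f v (S ∩ N v) := by
    intro v S
    simp only [hf, Finset.inter_assoc, Finset.inter_self]
  -- left side bound
  have hL : (∑ S ∈ Finset.univ.filter (fun S : Finset V => ∀ v : V, ∃ u ∈ S, G.Adj u v),
        μ ^ S.card) ≤ ∑ S ∈ (Finset.univ : Finset V).powerset, ∏ v, f v S := by
    rw [Finset.powerset_univ, Finset.sum_filter]
    refine Finset.sum_le_sum fun S _ => ?_
    by_cases hdom : ∀ v : V, ∃ u ∈ S, G.Adj u v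
    · rw [if_pos hdom]
      have hne : ∀ v : V, (S ∩ N v).Nonempty := by
        intro v
        obtain ⟨u, huS, hadj⟩ := hdom v
        exact ⟨u, Finset.mem_inter.mpr ⟨huS, by simp [hN, hadj.symm]⟩⟩
      have heq : ∏ v, f v S = ∏ v, (μ ^ (S ∩ N v).card) ^ ((r : ℝ)⁻¹) :=
        Finset.prod_congr rfl fun v _ => by simp only [hf, if_pos (hne v)]
      have hsum : ∑ v, (S ∩ N v).card = r * S.card := by
        have h1 : ∀ v : V, (S ∩ N v).card = ∑ u ∈ S, if u ∈ N v then 1 else 0 := by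
          intro v
          rw [← Finset.filter_mem_eq_inter]
          · rw [Finset.card_filter]
        calc ∑ v, (S ∩ N v).card = ∑ v : V, ∑ u ∈ S, if u ∈ N v then 1 else 0 :=
              Finset.sum_congr rfl fun v _ => h1 v
          _ = ∑ u ∈ S, ∑ v : V, if u ∈ N v then 1 else 0 := Finset.sum_comm
          _ = ∑ u ∈ S, r := by
              refine Finset.sum_congr rfl fun u _ => ?_
              rw [← hcount u, Finset.card_filter]
          _ = r * S.card := by rw [Finset.sum_const, smul_eq_mul, mul_comm]
      refine le_of_eq ?_
      rw [heq, Real.finset_prod_rpow _ _ (fun v _ => pow_nonneg hμ.le _),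
        Finset.prod_pow_eq_pow_sum, hsum, mul_comm, pow_mul,
        Real.pow_rpow_inv_natCast (pow_nonneg hμ.le _) hrne]
    · rw [if_neg hdom]
      exact Finset.prod_nonneg fun v _ => hf0 v S
  have key := finner_ineq r hrne N hcount Finset.univ f hf0 hdep
  -- right side computation
  have hR : ∀ v : V, ∑ T ∈ (N v ∩ Finset.univ).powerset, f v T ^ r = (1 + μ) ^ r - 1 := by
    intro v
    rw [Finset.inter_univ]
    have hterm : ∀ T ∈ (N v).powerset, f v T ^ r = μ ^ T.card - (if T = ∅ then 1 else 0) := by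
      intro T hT
      have hTN : T ∩ N v = T := Finset.inter_eq_left.mpr (Finset.mem_powerset.mp hT)
      simp only [hf, hTN]
      by_cases hTe : T = ∅
      · subst hTe
        simp [hrne, zero_pow hrne]
      · rw [if_pos (Finset.nonempty_iff_ne_empty.mpr hTe), if_neg hTe,
          Real.rpow_inv_natCast_pow (pow_nonneg hμ.le _) hrne, sub_zero]
    rw [Finset.sum_congr rfl hterm, Finset.sum_sub_distrib]
    have h2 : ∑ T ∈ (N v).powerset, μ ^ T.card = (1 + μ) ^ r := by
      have := Finset.prod_add (fun _ : V => μ) (fun _ : V => 1) (N v)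
      simp only [Finset.prod_const, Finset.prod_const_one, one_pow, mul_one] at this
      rw [add_comm, ← hreg v, SimpleGraph.degree, this]
    have h3 : ∑ T ∈ (N v).powerset, (if T = ∅ then (1:ℝ) else 0) = 1 := by
      rw [Finset.sum_ite_eq' (N v).powerset ∅ (fun _ => (1:ℝ))]
      simp
    rw [h2, h3]
  have hRprod : ∏ v : V, (∑ T ∈ (N v ∩ Finset.univ).powerset, f v T ^ r) ^ ((r : ℝ)⁻¹)
      = (((1 + μ) ^ r - 1) ^ 2) ^ ((Fintype.card V : ℝ) / (2 * r)) := by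
    have hx : (0:ℝ) ≤ (1 + μ) ^ r - 1 := by
      have : (1:ℝ) ≤ (1 + μ) ^ r := one_le_pow₀ (by linarith)
      linarith
    rw [Finset.prod_congr rfl fun v _ => by rw [hR v]]
    rw [Finset.prod_const, Finset.card_univ, ← Real.rpow_natCast (((1 + μ) ^ r - 1) ^ ((r:ℝ)⁻¹)) _,
      ← Real.rpow_mul hx]
    rw [← Real.rpow_natCast (((1 + μ) ^ r - 1)) 2, ← Real.rpow_mul hx]
    congr 1
    push_cast
    field_simp
  calc _ ≤ _ := hL
    _ ≤ _ := key
    _ = _ := hRprod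
end

section
/- If G is an r-regular graph on n vertices (r ≥ 1) and q ≥ 1 an integer, then the number of proper q-colorings of the open neighborhood hypergraph 𝓝(G) is at most (q^r - q)^(n/r). -/
open Finset

namespace Stmt8Aux

/-- Mask a function outside a finset. -/
def mask {V α : Type*} [DecidableEq V] (B : Finset V) (φ : V → Option α) : V → Option α :=
  fun v => if v ∈ B then φ v else none

/-- Generalized Hölder / geometric-arithmetic mean step, NNReal version. -/
lemma holder {ι γ : Type*} (s : Finset ι) (t : Finset γ) (r : ℕ) (hr : 1 ≤ r)
    (hs : s.card = r) (p : ι → γ → NNReal) :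
    ∑ c ∈ t, ∏ i ∈ s, p i c ^ ((r : ℝ)⁻¹) ≤ ∏ i ∈ s, (∑ c ∈ t, p i c) ^ ((r : ℝ)⁻¹) := by
  have hrpos : 0 < r := hr
  have hr0 : (r : ℝ) ≠ 0 := by positivity
  have hrn0 : (r : NNReal) ≠ 0 := Nat.cast_ne_zero.mpr (by omega)
  by_cases hz : ∃ i ∈ s, (∑ c ∈ t, p i c) = 0
  · obtain ⟨i, his, hi⟩ := hz
    have hpz : ∀ c ∈ t, p i c = 0 := by
      intro c hc
      have := (Finset.sum_eq_zero_iff).mp hi c hc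
      exact this
    have : ∑ c ∈ t, ∏ j ∈ s, p j c ^ ((r : ℝ)⁻¹) = 0 := by
      apply Finset.sum_eq_zero
      intro c hc
      apply Finset.prod_eq_zero his
      rw [hpz c hc, NNReal.zero_rpow (by simpa using hr0)]
    rw [this]
    exact zero_le
  · push_neg at hz
    set S : ι → NNReal := fun i => ∑ c ∈ t, p i c with hS
    have key : ∀ c ∈ t, ∏ i ∈ s, p i c ^ ((r : ℝ)⁻¹) ≤
        (∏ i ∈ s, S i ^ ((r : ℝ)⁻¹)) * ∑ i ∈ s, (r : NNReal)⁻¹ * (p i c / S i) := by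
      intro c _
      have hAMGM := NNReal.geom_mean_le_arith_mean_weighted s
        (fun _ => (r : NNReal)⁻¹) (fun i => p i c / S i)
        (by rw [Finset.sum_const, hs, nsmul_eq_mul, mul_inv_cancel₀ hrn0])
      have hcoe : ((r : NNReal)⁻¹ : ℝ) = (r : ℝ)⁻¹ := by
        push_cast
        rfl
      calc ∏ i ∈ s, p i c ^ ((r : ℝ)⁻¹)
          = ∏ i ∈ s, (S i ^ ((r : ℝ)⁻¹) * (p i c / S i) ^ ((r : ℝ)⁻¹)) := by
            apply Finset.prod_congr rfl
            intro i hi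
            rw [← NNReal.mul_rpow, mul_div_cancel₀ _ (hz i hi)]
        _ = (∏ i ∈ s, S i ^ ((r : ℝ)⁻¹)) * ∏ i ∈ s, (p i c / S i) ^ ((r : ℝ)⁻¹) :=
            Finset.prod_mul_distrib
        _ ≤ (∏ i ∈ s, S i ^ ((r : ℝ)⁻¹)) * ∑ i ∈ s, (r : NNReal)⁻¹ * (p i c / S i) := by
            apply mul_le_mul_right
            simpa [hcoe] using hAMGM
    calc ∑ c ∈ t, ∏ i ∈ s, p i c ^ ((r : ℝ)⁻¹)
        ≤ ∑ c ∈ t, (∏ i ∈ s, S i ^ ((r : ℝ)⁻¹)) * ∑ i ∈ s, (r : NNReal)⁻¹ * (p i c / S i) :=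
          Finset.sum_le_sum key
      _ = (∏ i ∈ s, S i ^ ((r : ℝ)⁻¹)) * ∑ c ∈ t, ∑ i ∈ s, (r : NNReal)⁻¹ * (p i c / S i) := by
          rw [Finset.mul_sum]
      _ = ∏ i ∈ s, S i ^ ((r : ℝ)⁻¹) := by
          rw [Finset.sum_comm]
          have h1 : ∀ i ∈ s, ∑ c ∈ t, (r : NNReal)⁻¹ * (p i c / S i) = (r : NNReal)⁻¹ := by
            intro i hi
            rw [← Finset.mul_sum, ← Finset.sum_div, div_self (hz i hi), mul_one]
          rw [Finset.sum_congr rfl h1, Finset.sum_const, hs, nsmul_eq_mul,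
            mul_inv_cancel₀ hrn0, mul_one]

/-- Shearer-type inequality for an exact `r`-fold cover, specialized to projections of a
set of partial functions. -/
lemma shearer {V α ι : Type*} [Fintype V] [DecidableEq V] [DecidableEq α] [Fintype α]
    [Fintype ι] (r : ℕ) (hr : 1 ≤ r) (A : ι → Finset V) (U : Finset V) :
    ∀ S : Finset (V → Option α),
      (∀ v ∈ U, (Finset.univ.filter (fun i => v ∈ A i)).card = r) →
      (∀ φ ∈ S, ∀ v, v ∉ U → φ v = none) →
      (S.card : NNReal) ^ r ≤ ∏ i, ((S.image (mask (A i))).card : NNReal) := by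
  classical
  have hr0 : (r : ℝ) ≠ 0 := by positivity
  induction U using Finset.induction_on with
  | empty =>
    intro S hcov hsupp
    rcases S.eq_empty_or_nonempty with hS | hS
    · rw [hS]
      simp only [Finset.card_empty, Nat.cast_zero, zero_pow (by omega : r ≠ 0)]
      exact zero_le
    · have hone : S.card = 1 := by
        have hle : S.card ≤ 1 := Finset.card_le_one.mpr (fun a ha b hb => by
          funext v
          rw [hsupp a ha v (Finset.notMem_empty v), hsupp b hb v (Finset.notMem_empty v)])
        have := Finset.card_pos.mpr hS
        omega
      obtain ⟨φ, hφ⟩ := Finset.card_eq_one.mp hone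
      rw [hφ]
      simp
  | @insert x U' hxU ih =>
    intro S hcov hsupp
    set z : (V → Option α) → (V → Option α) := fun φ v => if v = x then none else φ v with hzdef
    set Sc : Option α → Finset (V → Option α) := fun c => S.filter (fun φ => φ x = c) with hScdef
    set Tc : Option α → Finset (V → Option α) := fun c => (Sc c).image z with hTcdef
    have hcard : S.card = ∑ c : Option α, (Sc c).card :=
      Finset.card_eq_sum_card_fiberwise (fun φ _ => Finset.mem_univ (φ x))
    have hzinj : ∀ (c : Option α) (φ ψ : V → Option α), φ x = c → ψ x = c →
        z φ = z ψ → φ = ψ := by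
      intro c φ ψ hφ hψ h
      funext v
      by_cases hv : v = x
      · rw [hv, hφ, hψ]
      · have := congrFun h v
        simpa [hzdef, hv] using this
    have hTcard : ∀ c, (Tc c).card = (Sc c).card := by
      intro c
      apply Finset.card_image_of_injOn
      intro φ hφ ψ hψ h
      exact hzinj c φ ψ ((Finset.mem_filter.mp hφ).2) ((Finset.mem_filter.mp hψ).2) h
    have hIH : ∀ c : Option α, ((Tc c).card : NNReal) ^ r ≤
        ∏ i, (((Tc c).image (mask (A i))).card : NNReal) := by
      intro c
      apply ih
      · intro v hv
        exact hcov v (Finset.mem_insert_of_mem hv)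
      · intro φ hφ v hv
        obtain ⟨ψ, hψ, rfl⟩ := Finset.mem_image.mp hφ
        by_cases hvx : v = x
        · simp [hzdef, hvx]
        · have hvn : v ∉ insert x U' := by simp [hvx, hv]
          simp [hzdef, hvx, hsupp ψ (Finset.mem_filter.mp hψ).1 v hvn]
    have hF4 : ∀ i, x ∉ A i → ∀ c,
        ((Tc c).image (mask (A i))).card ≤ (S.image (mask (A i))).card := by
      intro i hxi c
      apply Finset.card_le_card
      intro ψ hψ
      rw [hTcdef] at hψ
      simp only [Finset.image_image] at hψ
      have hco : mask (A i) ∘ z = mask (A i) := by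
        funext φ v
        by_cases hv : v ∈ A i
        · have hne : v ≠ x := fun h => hxi (h ▸ hv)
          simp [mask, hzdef, hv, hne]
        · simp [mask, hv]
      rw [hco] at hψ
      obtain ⟨φ, hφ, rfl⟩ := Finset.mem_image.mp hψ
      exact Finset.mem_image_of_mem _ (Finset.mem_filter.mp hφ).1
    have hmaskx : ∀ i, x ∈ A i → ∀ c, ∀ φ ∈ Sc c, mask (A i) φ x = c := by
      intro i hxi c φ hφ
      simp [mask, hxi, (Finset.mem_filter.mp hφ).2]
    have hF5 : ∀ i, x ∈ A i →
        (∑ c : Option α, ((Tc c).image (mask (A i))).card) ≤ (S.image (mask (A i))).card := by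
      intro i hxi
      have hcomm : (mask (A i)) ∘ z = z ∘ (mask (A i)) := by
        funext φ v
        by_cases hv : v = x
        · subst hv
          simp [mask, hzdef, hxi]
        · by_cases hv2 : v ∈ A i <;> simp [mask, hzdef, hv, hv2]
      have hceq : ∀ c, ((Tc c).image (mask (A i))).card =
          ((Sc c).image (mask (A i))).card := by
        intro c
        have heq : (Tc c).image (mask (A i)) = ((Sc c).image (mask (A i))).image z := by
          rw [hTcdef]
          simp only [Finset.image_image]
          rw [hcomm]
        rw [heq]
        apply Finset.card_image_of_injOn
        intro φ hφ ψ hψ h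
        obtain ⟨φ', hφ', rfl⟩ := Finset.mem_image.mp hφ
        obtain ⟨ψ', hψ', rfl⟩ := Finset.mem_image.mp hψ
        exact hzinj c _ _ (hmaskx i hxi c φ' hφ') (hmaskx i hxi c ψ' hψ') h
      have hdisj : ∀ a ∈ (Finset.univ : Finset (Option α)), ∀ b ∈ Finset.univ, a ≠ b →
          Disjoint ((Sc a).image (mask (A i))) ((Sc b).image (mask (A i))) := by
        intro a _ b _ hab
        apply Finset.disjoint_left.mpr
        intro ψ hψa hψb
        obtain ⟨φ, hφ, rfl⟩ := Finset.mem_image.mp hψa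
        obtain ⟨φ', hφ', he⟩ := Finset.mem_image.mp hψb
        apply hab
        rw [← hmaskx i hxi a φ hφ, ← hmaskx i hxi b φ' hφ', he]
      calc ∑ c : Option α, ((Tc c).image (mask (A i))).card
          = ∑ c : Option α, ((Sc c).image (mask (A i))).card :=
            Finset.sum_congr rfl (fun c _ => hceq c)
        _ = ((Finset.univ : Finset (Option α)).biUnion
              (fun c => (Sc c).image (mask (A i)))).card :=
            (Finset.card_biUnion hdisj).symm
        _ ≤ (S.image (mask (A i))).card := by
            apply Finset.card_le_card
            apply Finset.biUnion_subset.mpr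
            intro c _
            exact Finset.image_subset_image (Finset.filter_subset _ _)
    -- the main chain
    set e : ℝ := (r : ℝ)⁻¹ with he
    set P : ι → NNReal := fun i => ((S.image (mask (A i))).card : NNReal) with hP
    set p : ι → Option α → NNReal :=
      fun i c => (((Tc c).image (mask (A i))).card : NNReal) with hp
    set T : Finset ι := Finset.univ.filter (fun i => x ∈ A i) with hT
    have hTcard' : T.card = r := hcov x (Finset.mem_insert_self x U')
    set Q : NNReal := ∏ i ∈ Finset.univ.filter (fun i => ¬ x ∈ A i), P i with hQ
    have hstep2 : ∀ c : Option α, ((Tc c).card : NNReal) ≤ (∏ i, p i c) ^ e := by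
      intro c
      have heq : ((Tc c).card : NNReal) = (((Tc c).card : NNReal) ^ r) ^ e := by
        rw [← NNReal.rpow_natCast _ r, ← NNReal.rpow_mul, he, mul_inv_cancel₀ hr0,
          NNReal.rpow_one]
      rw [heq]
      exact NNReal.rpow_le_rpow (hIH c) (by positivity)
    have hsplit : ∀ c, (∏ i, p i c) ^ e ≤ Q ^ e * ∏ i ∈ T, (p i c) ^ e := by
      intro c
      have h1 : ∏ i, p i c =
          (∏ i ∈ T, p i c) * ∏ i ∈ Finset.univ.filter (fun i => ¬ x ∈ A i), p i c :=
        (Finset.prod_filter_mul_prod_filter_not _ _ _).symm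
      have h2 : ∏ i ∈ Finset.univ.filter (fun i => ¬ x ∈ A i), p i c ≤ Q := by
        apply Finset.prod_le_prod'
        intro i hi
        have hxi : x ∉ A i := (Finset.mem_filter.mp hi).2
        simp only [hp, hP]
        exact_mod_cast hF4 i hxi c
      calc (∏ i, p i c) ^ e
          = ((∏ i ∈ T, p i c) * ∏ i ∈ Finset.univ.filter (fun i => ¬ x ∈ A i), p i c) ^ e := by
            rw [← h1]
        _ ≤ ((∏ i ∈ T, p i c) * Q) ^ e :=
            NNReal.rpow_le_rpow (mul_le_mul_right h2 _) (by positivity)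
        _ = Q ^ e * ∏ i ∈ T, (p i c) ^ e := by
            rw [NNReal.mul_rpow, mul_comm, NNReal.finset_prod_rpow]
    have hSsum : (S.card : NNReal) = ∑ c : Option α, ((Tc c).card : NNReal) := by
      rw [hcard]
      push_cast
      exact Finset.sum_congr rfl (fun c _ => by rw [hTcard c])
    have hfinal : (S.card : NNReal) ≤ Q ^ e * ∏ i ∈ T, P i ^ e := by
      calc (S.card : NNReal) = ∑ c : Option α, ((Tc c).card : NNReal) := hSsum
        _ ≤ ∑ c : Option α, Q ^ e * ∏ i ∈ T, (p i c) ^ e :=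
            Finset.sum_le_sum (fun c _ => (hstep2 c).trans (hsplit c))
        _ = Q ^ e * ∑ c : Option α, ∏ i ∈ T, (p i c) ^ e := by rw [← Finset.mul_sum]
        _ ≤ Q ^ e * ∏ i ∈ T, (∑ c : Option α, p i c) ^ e := by
            apply mul_le_mul_right
            exact holder T Finset.univ r hr hTcard' p
        _ ≤ Q ^ e * ∏ i ∈ T, P i ^ e := by
            apply mul_le_mul_right
            apply Finset.prod_le_prod'
            intro i hi
            apply NNReal.rpow_le_rpow _ (by positivity)
            have hxi : x ∈ A i := (Finset.mem_filter.mp hi).2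
            simp only [hp, hP]
            exact_mod_cast hF5 i hxi
    have hrhs : (Q ^ e * ∏ i ∈ T, P i ^ e) ^ r = ∏ i, P i := by
      have hxr : ∀ y : NNReal, (y ^ e) ^ r = y := by
        intro y
        rw [← NNReal.rpow_natCast (y ^ e) r, ← NNReal.rpow_mul, he,
          inv_mul_cancel₀ hr0, NNReal.rpow_one]
      rw [mul_pow, hxr, ← Finset.prod_pow]
      have : ∀ i ∈ T, (P i ^ e) ^ r = P i := fun i _ => hxr (P i)
      rw [Finset.prod_congr rfl this, hQ, hT, mul_comm,
        Finset.prod_filter_mul_prod_filter_not]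
    calc (S.card : NNReal) ^ r ≤ (Q ^ e * ∏ i ∈ T, P i ^ e) ^ r :=
          pow_le_pow_left' hfinal r
      _ = ∏ i, P i := hrhs

end Stmt8Aux

/-- For an `r`-regular graph `G` on `n` vertices and `q ≥ 1`, the number of proper
`q`-colorings of the open neighborhood hypergraph of `G` is at most `(q^r - q)^(n/r)`. -/
theorem stmt8 {V : Type*} [Fintype V] (G : SimpleGraph V) [DecidableRel G.Adj]
    (r : ℕ) (hr : 1 ≤ r) (hreg : G.IsRegularOfDegree r) (q : ℕ) (hq : 1 ≤ q) :
    ({φ : V → Fin q | ∀ v : V, ∃ u ∈ G.neighborFinset v, ∃ w ∈ G.neighborFinset v,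
        φ u ≠ φ w}.ncard : ℝ) ≤
      ((q : ℝ) ^ r - q) ^ ((Fintype.card V : ℝ) / r) := by
  classical
  have hr0 : (r : ℝ) ≠ 0 := by positivity
  set n := Fintype.card V with hn
  set F : Finset (V → Fin q) := Finset.univ.filter
    (fun φ => ∀ v : V, ∃ u ∈ G.neighborFinset v, ∃ w ∈ G.neighborFinset v, φ u ≠ φ w) with hF
  have hset : {φ : V → Fin q | ∀ v : V, ∃ u ∈ G.neighborFinset v, ∃ w ∈ G.neighborFinset v,
      φ u ≠ φ w} = ↑F := by
    ext φ
    simp [hF]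
  rw [hset, Set.ncard_coe_finset]
  set S : Finset (V → Option (Fin q)) := F.image (fun φ v => some (φ v)) with hS
  have hScard : S.card = F.card := Finset.card_image_of_injective _
    (fun φ ψ h => funext fun v => Option.some_injective _ (congrFun h v))
  have hcov : ∀ v ∈ (Finset.univ : Finset V),
      (Finset.univ.filter (fun i => v ∈ G.neighborFinset i)).card = r := by
    intro v _
    have heq : Finset.univ.filter (fun i => v ∈ G.neighborFinset i) = G.neighborFinset v := by
      ext u
      simp [SimpleGraph.mem_neighborFinset, SimpleGraph.adj_comm]
    rw [heq]
    exact hreg v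
  have hsh := Stmt8Aux.shearer r hr (fun v : V => G.neighborFinset v) Finset.univ S hcov
    (fun φ _ v hv => absurd (Finset.mem_univ v) hv)
  rw [hScard] at hsh
  -- bound each projection
  have hproj : ∀ v : V,
      (S.image (Stmt8Aux.mask (G.neighborFinset v))).card ≤ q ^ r - q := by
    intro v
    set Bv := G.neighborFinset v with hBv
    have hBcard : Bv.card = r := hreg v
    have hBne : Bv.Nonempty := Finset.card_pos.mp (by omega)
    obtain ⟨b₀, hb₀⟩ := hBne
    set D : Finset ({ b // b ∈ Bv } → Fin q) :=
      Finset.univ.filter (fun g => ∃ a b, g a ≠ g b) with hD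
    have hform : ∀ ψ ∈ S.image (Stmt8Aux.mask Bv),
        (∀ v' ∈ Bv, ∃ a, ψ v' = some a) ∧ ∀ v' ∉ Bv, ψ v' = none := by
      intro ψ hψ
      obtain ⟨χ, hχ, rfl⟩ := Finset.mem_image.mp hψ
      obtain ⟨φ, hφ, rfl⟩ := Finset.mem_image.mp hχ
      constructor
      · intro v' hv'
        exact ⟨φ v', by simp [Stmt8Aux.mask, hv']⟩
      · intro v' hv'
        simp [Stmt8Aux.mask, hv']
    have h1 : (S.image (Stmt8Aux.mask Bv)).card ≤ D.card := by
      apply Finset.card_le_card_of_injOn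
        (fun ψ (b : {b // b ∈ Bv}) => (ψ b.1).getD ⟨0, hq⟩)
      · intro ψ hψ
        obtain ⟨χ, hχ, rfl⟩ := Finset.mem_image.mp hψ
        obtain ⟨φ, hφ, rfl⟩ := Finset.mem_image.mp hχ
        obtain ⟨u, hu, w, hw, hne⟩ := (Finset.mem_filter.mp hφ).2 v
        rw [hD]
        refine Finset.mem_filter.mpr ⟨Finset.mem_univ _, ⟨u, hu⟩, ⟨w, hw⟩, ?_⟩
        dsimp only [Stmt8Aux.mask]
        rw [if_pos hu, if_pos hw]
        simpa using hne
      · intro ψ1 hψ1 ψ2 hψ2 h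
        obtain ⟨hf1, hg1⟩ := hform ψ1 hψ1
        obtain ⟨hf2, hg2⟩ := hform ψ2 hψ2
        funext v'
        by_cases hv' : v' ∈ Bv
        · obtain ⟨a1, ha1⟩ := hf1 v' hv'
          obtain ⟨a2, ha2⟩ := hf2 v' hv'
          have := congrFun h ⟨v', hv'⟩
          simp only [ha1, ha2, Option.getD_some] at this
          rw [ha1, ha2, this]
        · rw [hg1 v' hv', hg2 v' hv']
    have htot : (Finset.univ : Finset ({b // b ∈ Bv} → Fin q)).card = q ^ r := by
      rw [Finset.card_univ, Fintype.card_fun]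
      simp [Fintype.card_coe, hBcard]
    have hconst : (Finset.univ.filter
        (fun g : {b // b ∈ Bv} → Fin q => ¬ ∃ a b, g a ≠ g b)).card = q := by
      have heq : Finset.univ.filter (fun g : {b // b ∈ Bv} → Fin q => ¬ ∃ a b, g a ≠ g b) =
          (Finset.univ : Finset (Fin q)).image (fun c => fun _ => c) := by
        ext g
        simp only [Finset.mem_filter, Finset.mem_univ, true_and, Finset.mem_image, not_exists]
        push_neg
        constructor
        · intro hg
          exact ⟨g ⟨b₀, hb₀⟩, funext fun a => (hg a ⟨b₀, hb₀⟩).symm⟩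
        · rintro ⟨c, rfl⟩ a b
          rfl
      rw [heq, Finset.card_image_of_injective _ (fun c c' hcc => congrFun hcc ⟨b₀, hb₀⟩),
        Finset.card_univ, Fintype.card_fin]
    have hsplit : D.card + (Finset.univ.filter
        (fun g : {b // b ∈ Bv} → Fin q => ¬ ∃ a b, g a ≠ g b)).card =
        (Finset.univ : Finset ({b // b ∈ Bv} → Fin q)).card := by
      rw [hD]
      exact Finset.card_filter_add_card_filter_not _
    rw [hconst, htot] at hsplit
    exact (Nat.eq_sub_of_add_eq hsplit) ▸ h1
  -- combine
  have hprod : (F.card : NNReal) ^ r ≤ ((q ^ r - q : ℕ) : NNReal) ^ n := by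
    calc (F.card : NNReal) ^ r
        ≤ ∏ i : V, ((S.image (Stmt8Aux.mask (G.neighborFinset i))).card : NNReal) := hsh
      _ ≤ ∏ _i : V, ((q ^ r - q : ℕ) : NNReal) := by
          apply Finset.prod_le_prod'
          intro i _
          exact_mod_cast hproj i
      _ = ((q ^ r - q : ℕ) : NNReal) ^ n := by
          rw [Finset.prod_const, Finset.card_univ]
  have hR : (F.card : ℝ) ^ r ≤ (((q ^ r - q : ℕ)) : ℝ) ^ n := by
    exact_mod_cast hprod
  have hqr : q ≤ q ^ r := Nat.le_self_pow (by omega) q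
  have hXeq : (((q ^ r - q : ℕ)) : ℝ) = (q : ℝ) ^ r - q := by
    push_cast [hqr]
    ring
  rw [hXeq] at hR
  set X : ℝ := (q : ℝ) ^ r - q with hX
  have hX0 : (0 : ℝ) ≤ X := by
    rw [← hXeq]
    exact Nat.cast_nonneg _
  have h1 : (F.card : ℝ) = ((F.card : ℝ) ^ (r : ℕ)) ^ ((r : ℝ)⁻¹) := by
    rw [← Real.rpow_natCast (F.card : ℝ) r, ← Real.rpow_mul (Nat.cast_nonneg _),
      mul_inv_cancel₀ hr0, Real.rpow_one]
  rw [h1]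
  calc ((F.card : ℝ) ^ (r : ℕ)) ^ ((r : ℝ)⁻¹)
      ≤ (X ^ (n : ℕ)) ^ ((r : ℝ)⁻¹) := Real.rpow_le_rpow (pow_nonneg (Nat.cast_nonneg _) _) hR (by positivity)
    _ = X ^ ((n : ℝ) / (r : ℝ)) := by
        rw [← Real.rpow_natCast X n, ← Real.rpow_mul hX0, div_eq_mul_inv]
end

section
/- If G is an r-regular graph on n vertices (r ≥ 1) and q ≥ r, then the number of rainbow q-colorings of the open neighborhood hypergraph 𝓝(G) is at most (q(q-1)⋯(q-r+1))^(n/r). -/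
open Finset MeasureTheory
open scoped ENNReal

section Proj
variable {V β : Type*} [DecidableEq V] [Fintype V] [DecidableEq β] [Fintype β]

/-- Restriction of a function to a finset, as a function into `Option β`. -/
def res (A : Finset V) (φ : V → β) : V → Option β := fun v => if v ∈ A then some (φ v) else none

/-- Projection of a set of functions to a coordinate set. -/
def proj (A : Finset V) (S : Finset (V → β)) : Finset (V → Option β) := S.image (res A)

lemma proj_mono (A : Finset V) {S T : Finset (V → β)} (h : S ⊆ T) : proj A S ⊆ proj A T :=
  Finset.image_subset_image h

lemma card_proj_slice {u : V} {U : Finset V} (hu : u ∉ U) (S : Finset (V → β)) (x : β) :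
    (proj (insert u U) (S.filter fun φ => φ u = x)).card
      = (proj U (S.filter fun φ => φ u = x)).card := by
  apply Finset.card_bij' (fun g _ => fun v => if v = u then none else g v)
    (fun g _ => fun v => if v = u then some x else g v)
  · intro g hg
    simp only [proj, mem_image, mem_filter] at hg ⊢
    obtain ⟨φ, ⟨hφS, hφu⟩, rfl⟩ := hg
    refine ⟨φ, ⟨hφS, hφu⟩, ?_⟩
    funext v
    by_cases hv : v = u
    · subst hv; simp [res, hu]
    · by_cases hvU : v ∈ U <;> simp [res, hv, hvU, Finset.mem_insert]
  · intro g hg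
    simp only [proj, mem_image, mem_filter] at hg ⊢
    obtain ⟨φ, ⟨hφS, hφu⟩, rfl⟩ := hg
    refine ⟨φ, ⟨hφS, hφu⟩, ?_⟩
    funext v
    by_cases hv : v = u
    · subst hv; simp [res, hφu]
    · by_cases hvU : v ∈ U <;> simp [res, hv, hvU, Finset.mem_insert]
  · intro g hg
    simp only [proj, mem_image, mem_filter] at hg
    obtain ⟨φ, ⟨hφS, hφu⟩, rfl⟩ := hg
    funext v
    by_cases hv : v = u
    · subst hv; simp [res, hφu]
    · simp [hv]
  · intro g hg
    simp only [proj, mem_image, mem_filter] at hg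
    obtain ⟨φ, ⟨hφS, hφu⟩, rfl⟩ := hg
    funext v
    by_cases hv : v = u
    · subst hv; simp [res, hu]
    · simp [hv]

lemma card_proj_insert {u : V} {U : Finset V} (hu : u ∉ U) (S : Finset (V → β)) :
    (proj (insert u U) S).card
      = ∑ x : β, (proj U (S.filter fun φ => φ u = x)).card := by
  have key : proj (insert u U) S
      = Finset.univ.biUnion (fun x : β => proj (insert u U) (S.filter fun φ => φ u = x)) := by
    ext g
    simp only [proj, mem_image, Finset.mem_biUnion, Finset.mem_univ, mem_filter, true_and]
    constructor
    · rintro ⟨φ, hφ, rfl⟩; exact ⟨φ u, φ, ⟨hφ, rfl⟩, rfl⟩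
    · rintro ⟨x, φ, ⟨hφ, _⟩, rfl⟩; exact ⟨φ, hφ, rfl⟩
  rw [key, Finset.card_biUnion]
  · exact Finset.sum_congr rfl fun x _ => card_proj_slice hu S x
  · intro x _ y _ hxy
    simp only [Finset.disjoint_left, proj, mem_image, mem_filter]
    rintro g ⟨φ, ⟨_, hφu⟩, rfl⟩ ⟨ψ, ⟨_, hψu⟩, hψ⟩
    apply hxy
    have := congrFun hψ u
    simp only [res, Finset.mem_insert_self, if_pos] at this
    rw [hφu, hψu] at this
    exact (Option.some_injective _ this).symm

end Proj

/-- Discrete Hölder: sum over a fintype of a product with weights summing to 1. -/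
lemma sum_prod_rpow_le {β ι : Type*} [Fintype β] (s : Finset ι) (f : ι → β → ℝ≥0∞)
    {p : ι → ℝ} (hp : ∑ i ∈ s, p i = 1) (h2p : ∀ i ∈ s, 0 ≤ p i) :
    ∑ x : β, ∏ i ∈ s, f i x ^ p i ≤ ∏ i ∈ s, (∑ x : β, f i x) ^ p i := by
  letI : MeasurableSpace β := ⊤
  haveI : MeasurableSingletonClass β := ⟨fun _ => MeasurableSpace.measurableSet_top⟩
  have key := ENNReal.lintegral_prod_norm_pow_le (μ := Measure.count (α := β)) s
    (f := f) (fun i _ => (measurable_from_top (f := f i)).aemeasurable) hp h2p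
  rw [lintegral_count, tsum_fintype] at key
  refine key.trans (le_of_eq ?_)
  refine Finset.prod_congr rfl fun i _ => ?_
  rw [lintegral_count, tsum_fintype]

/-- Hölder-type step over ℕ. -/
lemma hoelder_nat {β ι : Type*} [Fintype β] [Fintype ι] {r : ℕ} (hr : 1 ≤ r)
    (hcard : Fintype.card ι = r) (K : ℕ) (c : β → ℕ)
    (e : ι → β → ℕ) (h : ∀ x, c x ^ r ≤ K * ∏ i, e i x) :
    (∑ x, c x) ^ r ≤ K * ∏ i, (∑ x, e i x) := by
  have hr0 : (r : ℝ) ≠ 0 := by positivity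
  have hir : (0:ℝ) ≤ 1 / r := by positivity
  set ir : ℝ := 1 / r with hirdef
  have step1 : ∀ x, (c x : ℝ≥0∞) ≤ (K : ℝ≥0∞) ^ ir * ∏ i, (e i x : ℝ≥0∞) ^ ir := by
    intro x
    have h1 : ((c x : ℝ≥0∞)) ^ (r : ℕ) ≤ (K : ℝ≥0∞) * ∏ i, (e i x : ℝ≥0∞) := by
      have := h x
      exact_mod_cast Nat.cast_le.mpr this
    have h2 := ENNReal.rpow_le_rpow h1 hir
    calc (c x : ℝ≥0∞) = (((c x : ℝ≥0∞)) ^ (r:ℕ)) ^ ir := by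
          rw [← ENNReal.rpow_natCast, ← ENNReal.rpow_mul, hirdef, mul_one_div,
            div_self hr0, ENNReal.rpow_one]
      _ ≤ ((K : ℝ≥0∞) * ∏ i, (e i x : ℝ≥0∞)) ^ ir := h2
      _ = (K : ℝ≥0∞) ^ ir * ∏ i, (e i x : ℝ≥0∞) ^ ir := by
          rw [ENNReal.mul_rpow_of_nonneg _ _ hir, ENNReal.prod_rpow_of_nonneg hir]
  have step2 : (∑ x, (c x : ℝ≥0∞)) ≤ (K : ℝ≥0∞) ^ ir * ∏ i, (∑ x, (e i x : ℝ≥0∞)) ^ ir := by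
    calc (∑ x, (c x : ℝ≥0∞)) ≤ ∑ x, (K : ℝ≥0∞) ^ ir * ∏ i, (e i x : ℝ≥0∞) ^ ir :=
          Finset.sum_le_sum fun x _ => step1 x
      _ = (K : ℝ≥0∞) ^ ir * ∑ x, ∏ i, (e i x : ℝ≥0∞) ^ ir := by rw [← Finset.mul_sum]
      _ ≤ (K : ℝ≥0∞) ^ ir * ∏ i, (∑ x, (e i x : ℝ≥0∞)) ^ ir := by
          gcongr
          refine sum_prod_rpow_le _ _ ?_ (fun _ _ => hir)
          simp [hirdef, Finset.sum_const, hcard, mul_one_div, div_self hr0, mul_inv_cancel₀ hr0]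
  have step3 : (∑ x, (c x : ℝ≥0∞)) ^ (r:ℕ) ≤ (K : ℝ≥0∞) * ∏ i, (∑ x, (e i x : ℝ≥0∞)) := by
    have h3 := ENNReal.rpow_le_rpow (z := (r:ℝ)) step2 (by positivity)
    rw [ENNReal.mul_rpow_of_nonneg _ _ (by positivity : (0:ℝ) ≤ (r:ℝ)),
      ← ENNReal.prod_rpow_of_nonneg (by positivity : (0:ℝ) ≤ (r:ℝ))] at h3
    simp only [← ENNReal.rpow_mul, hirdef, one_div, inv_mul_cancel₀ hr0, ENNReal.rpow_one] at h3
    rw [← ENNReal.rpow_natCast]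
    exact h3
  have final : (((∑ x, c x) ^ r : ℕ) : ℝ≥0∞) ≤ ((K * ∏ i, (∑ x, e i x) : ℕ) : ℝ≥0∞) := by
    push_cast
    exact step3
  exact_mod_cast final

lemma list_prod_fin {α M : Type*} [CommMonoid M] (l : List α) (g : α → M) :
    (l.map g).prod = ∏ i : Fin l.length, g (l.get i) := by
  conv_lhs => rw [← List.ofFn_get l]
  rw [List.map_ofFn, List.prod_ofFn]
  rfl
theorem shearer_s10 {V β : Type*} [DecidableEq V] [Fintype V] [DecidableEq β] [Fintype β]
    {r : ℕ} (hr : 1 ≤ r) (U : Finset V) :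
    ∀ (𝓕 : Multiset (Finset V)) (S : Finset (V → β)),
      (∀ F ∈ 𝓕, F ⊆ U) → (∀ v ∈ U, r ≤ 𝓕.countP (v ∈ ·)) →
      (proj U S).card ^ r ≤ (𝓕.map (fun F => (proj F S).card)).prod := by
  induction U using Finset.induction_on with
  | empty =>
    intro 𝓕 S hsub hcov
    rcases S.eq_empty_or_nonempty with rfl | hS
    · simp only [proj, Finset.image_empty, Finset.card_empty]
      rw [zero_pow (by omega : r ≠ 0)]
      exact Nat.zero_le _
    · have h1 : (proj (∅ : Finset V) S).card ≤ 1 := by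
        apply Finset.card_le_one.mpr
        intro a ha b hb
        simp only [proj, mem_image] at ha hb
        obtain ⟨φ, _, rfl⟩ := ha
        obtain ⟨ψ, _, rfl⟩ := hb
        funext v; simp [res]
      calc (proj (∅ : Finset V) S).card ^ r ≤ 1 ^ r := Nat.pow_le_pow_left h1 r
        _ = 1 := one_pow r
        _ ≤ _ := by
          apply Nat.one_le_iff_ne_zero.mpr
          apply Nat.pos_iff_ne_zero.mp
          apply Multiset.prod_pos
          intro a ha
          obtain ⟨F, hF, rfl⟩ := Multiset.mem_map.mp ha
          exact Finset.card_pos.mpr ((hS.image _))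
  | @insert u U' hu ih =>
    intro 𝓕 S hsub hcov
    rcases S.eq_empty_or_nonempty with rfl | hS
    · simp only [proj, Finset.image_empty, Finset.card_empty]
      rw [zero_pow (by omega : r ≠ 0)]
      exact Nat.zero_le _
    classical
    set slice : β → Finset (V → β) := fun x => S.filter (fun φ => φ u = x) with hslice
    set A : Finset V → ℕ := fun F => (proj F S).card with hA
    set 𝓕₁ : Multiset (Finset V) := 𝓕.filter (fun F => u ∈ F) with h𝓕₁
    set 𝓕₀ : Multiset (Finset V) := 𝓕.filter (fun F => u ∉ F) with h𝓕₀
    have hsplit : 𝓕₁ + 𝓕₀ = 𝓕 := Multiset.filter_add_not _ 𝓕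
    have hm : r ≤ Multiset.card 𝓕₁ := by
      have := hcov u (mem_insert_self u U')
      rwa [Multiset.countP_eq_card_filter] at this
    set LG : List (Finset V) := 𝓕₁.toList.take r with hLGdef
    set LH : List (Finset V) := 𝓕₁.toList.drop r with hLHdef
    have hLG : (LG : Multiset (Finset V)) + (LH : Multiset (Finset V)) = 𝓕₁ := by
      have h1 : LG ++ LH = 𝓕₁.toList := by rw [hLGdef, hLHdef, List.take_append_drop]
      calc (LG : Multiset (Finset V)) + (LH : Multiset (Finset V))
          = ((LG ++ LH : List (Finset V)) : Multiset (Finset V)) := rfl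
        _ = ((𝓕₁.toList : List (Finset V)) : Multiset (Finset V)) := by rw [h1]
        _ = 𝓕₁ := Multiset.coe_toList 𝓕₁
    have hLGlen : LG.length = r := by
      rw [hLGdef, List.length_take, Multiset.length_toList]
      omega
    have hmemG : ∀ F ∈ LG, u ∈ F := by
      intro F hF
      have : F ∈ 𝓕₁ := by
        rw [← Multiset.coe_toList 𝓕₁, Multiset.mem_coe]
        exact (List.take_sublist r _).subset hF
      exact (Multiset.mem_filter.mp this).2
    have hmemH : ∀ F ∈ LH, u ∈ F := by
      intro F hF
      have : F ∈ 𝓕₁ := by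
        rw [← Multiset.coe_toList 𝓕₁, Multiset.mem_coe]
        exact (List.drop_sublist r _).subset hF
      exact (Multiset.mem_filter.mp this).2
    set e : Finset V → β → ℕ := fun F x => (proj (F.erase u) (slice x)).card with he
    set c : β → ℕ := fun x => (proj U' (slice x)).card with hc
    set K : ℕ := (𝓕₀.map A).prod * ((LH : Multiset (Finset V)).map A).prod with hK
    -- the pointwise inequality
    have hx : ∀ x, c x ^ r ≤ K * ((LG : Multiset (Finset V)).map (fun F => e F x)).prod := by
      intro x
      have hsub' : ∀ F ∈ 𝓕₀ + 𝓕₁.map (·.erase u), F ⊆ U' := by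
        intro F hF
        rcases Multiset.mem_add.mp hF with hF | hF
        · have h1 := Multiset.mem_filter.mp hF
          have h2 := hsub F h1.1
          intro v hv
          rcases Finset.mem_insert.mp (h2 hv) with rfl | h
          · exact absurd hv h1.2
          · exact h
        · obtain ⟨G, hG, rfl⟩ := Multiset.mem_map.mp hF
          have h2 := hsub G (Multiset.mem_filter.mp hG).1
          have := Finset.erase_subset_erase u h2
          rwa [Finset.erase_insert hu] at this
      have hcov' : ∀ v ∈ U', r ≤ (𝓕₀ + 𝓕₁.map (·.erase u)).countP (v ∈ ·) := by
        intro v hv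
        have hvu : v ≠ u := fun h => hu (h ▸ hv)
        rw [Multiset.countP_add, Multiset.countP_map]
        have h2 : Multiset.countP (fun F => v ∈ (fun x => x.erase u) F) 𝓕₁
            = Multiset.countP (fun F => v ∈ F) 𝓕₁ := by
          apply Multiset.countP_congr rfl
          intro F _
          simp [Finset.mem_erase, hvu]
        rw [Multiset.countP_eq_card_filter] at h2 ⊢
        rw [h2]
        have hv' := hcov v (Finset.mem_insert_of_mem hv)
        rw [← hsplit, Multiset.countP_add, Multiset.countP_eq_card_filter,
          Multiset.countP_eq_card_filter] at hv'
        rw [Multiset.countP_eq_card_filter]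
        omega
      have := ih (𝓕₀ + 𝓕₁.map (·.erase u)) (slice x) hsub' hcov'
      -- rewrite RHS
      rw [Multiset.map_add, Multiset.prod_add, Multiset.map_map] at this
      refine this.trans ?_
      have hb0 : (𝓕₀.map (fun F => (proj F (slice x)).card)).prod ≤ (𝓕₀.map A).prod := by
        apply Multiset.prod_map_le_prod_map
        intro F _
        exact Finset.card_le_card (proj_mono F (Finset.filter_subset _ S))
      have h1split : (𝓕₁.map (fun F => e F x)) = (LG : Multiset (Finset V)).map (fun F => e F x)
          + (LH : Multiset (Finset V)).map (fun F => e F x) := by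
        rw [← hLG, Multiset.map_add]
      have hbH : ((LH : Multiset (Finset V)).map (fun F => e F x)).prod
          ≤ ((LH : Multiset (Finset V)).map A).prod := by
        apply Multiset.prod_map_le_prod_map
        intro F hF
        have huF : u ∈ F := hmemH F (Multiset.mem_coe.mp hF)
        have heq : e F x = (proj F (slice x)).card := by
          rw [he]
          have h1 := card_proj_slice (Finset.notMem_erase u F) (S := S) (x := x)
          rw [Finset.insert_erase huF] at h1
          exact h1.symm
        rw [heq]
        exact Finset.card_le_card (proj_mono F (Finset.filter_subset _ S))
      calc (𝓕₀.map fun F => (proj F (slice x)).card).prod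
            * ((𝓕₁.map fun F => (proj (Finset.erase F u) (slice x)).card)).prod
          = (𝓕₀.map fun F => (proj F (slice x)).card).prod
            * ((𝓕₁.map (fun F => e F x))).prod := by rfl
        _ = (𝓕₀.map fun F => (proj F (slice x)).card).prod
            * (((LG : Multiset (Finset V)).map (fun F => e F x)).prod
              * ((LH : Multiset (Finset V)).map (fun F => e F x)).prod) := by
              rw [h1split, Multiset.prod_add]
        _ ≤ (𝓕₀.map A).prod * (((LG : Multiset (Finset V)).map (fun F => e F x)).prod
              * ((LH : Multiset (Finset V)).map A).prod) := by
              exact Nat.mul_le_mul hb0 (Nat.mul_le_mul_left _ hbH)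
        _ = K * ((LG : Multiset (Finset V)).map (fun F => e F x)).prod := by
              rw [hK]; ring
    -- convert multiset products over LG to products over Fin
    have hlist : ∀ (g : Finset V → ℕ),
        ((LG : Multiset (Finset V)).map g).prod = ∏ i : Fin LG.length, g (LG.get i) := by
      intro g
      rw [Multiset.map_coe, Multiset.prod_coe]
      exact list_prod_fin LG g
    have hfin : Fintype.card (Fin LG.length) = r := by simp [hLGlen]
    have hhoeld := hoelder_nat hr hfin K c (fun i x => e (LG.get i) x)
      (fun x => by rw [← hlist (fun F => e F x)] at *; exact hx x)
    -- sum of e over colors equals A F for u ∈ F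
    have hsum : ∀ F, u ∈ F → (∑ x : β, e F x) = A F := by
      intro F huF
      have h1 := card_proj_insert (Finset.notMem_erase u F) S
      rw [Finset.insert_erase huF] at h1
      exact h1.symm
    -- assemble
    have hlhs : (proj (insert u U') S).card = ∑ x : β, c x := card_proj_insert hu S
    rw [hlhs]
    refine hhoeld.trans ?_
    have : ∏ i : Fin LG.length, (∑ x : β, e (LG.get i) x)
        = ∏ i : Fin LG.length, A (LG.get i) := by
      apply Finset.prod_congr rfl
      intro i _
      exact hsum _ (hmemG _ (List.get_mem LG i))
    rw [this]
    have hprodA : (𝓕.map A).prod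
        = K * ∏ i : Fin LG.length, A (LG.get i) := by
      rw [← hsplit, ← hLG, hK]
      rw [Multiset.map_add, Multiset.prod_add, Multiset.map_add, Multiset.prod_add, hlist A]
      ring
    rw [hprodA]

/-- For an `r`-regular graph `G` on `n` vertices and `q ≥ r`, the number of rainbow
`q`-colorings of the open neighborhood hypergraph of `G` is at most
`(q(q-1)⋯(q-r+1))^(n/r)`. -/
theorem stmt10 {V : Type*} [Fintype V] (G : SimpleGraph V) [DecidableRel G.Adj]
    (r : ℕ) (hr : 1 ≤ r) (hreg : G.IsRegularOfDegree r) (q : ℕ) (hq : r ≤ q) :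
    ({φ : V → Fin q | ∀ v : V, Set.InjOn φ (G.neighborSet v)}.ncard : ℝ) ≤
      (q.descFactorial r : ℝ) ^ ((Fintype.card V : ℝ) / r) := by
  classical
  have hq0 : 0 < q := lt_of_lt_of_le hr hq
  set S : Finset (V → Fin q) :=
    Finset.univ.filter (fun φ => ∀ v, Set.InjOn φ (G.neighborSet v)) with hSdef
  have hset : {φ : V → Fin q | ∀ v : V, Set.InjOn φ (G.neighborSet v)} = ↑S := by
    ext φ; simp [hSdef]
  rw [hset, Set.ncard_coe_finset]
  set D : ℕ := q.descFactorial r with hDdef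
  set n : ℕ := Fintype.card V with hndef
  -- Step 1: the natural-number Shearer bound  S.card ^ r ≤ D ^ n
  have hnat : S.card ^ r ≤ D ^ n := by
    set 𝓕 : Multiset (Finset V) := Finset.univ.val.map (fun v => G.neighborFinset v) with h𝓕
    have hcov : ∀ v ∈ (Finset.univ : Finset V), r ≤ 𝓕.countP (v ∈ ·) := by
      intro v _
      rw [h𝓕, Multiset.countP_map]
      have : Multiset.filter (fun w => v ∈ G.neighborFinset w) Finset.univ.val
            = (Finset.univ.filter (fun w => G.Adj v w)).val := by
        rw [Finset.filter_val]
        apply Multiset.filter_congr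
        intro w _
        simp [SimpleGraph.mem_neighborFinset, G.adj_comm]
      rw [this]
      have : (Finset.univ.filter (fun w => G.Adj v w)) = G.neighborFinset v := by
        ext w; simp [SimpleGraph.mem_neighborFinset]
      rw [Finset.card_val, this]
      exact le_of_eq (hreg v).symm
    have hmain := shearer_s10 (β := Fin q) hr (Finset.univ : Finset V) 𝓕 S
      (fun F _ => F.subset_univ) hcov
    have hproj : (proj Finset.univ S).card = S.card := by
      apply Finset.card_image_of_injective
      intro φ ψ h
      funext v
      have := congrFun h v
      simpa [res] using this
    rw [hproj] at hmain
    refine hmain.trans ?_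
    -- bound each projection by D
    have hbound : ∀ v : V, (proj (G.neighborFinset v) S).card ≤ D := by
      intro v
      set N : Finset V := G.neighborFinset v with hN
      have hNcard : Fintype.card ↥N = r := by
        rw [Fintype.card_coe]; exact hreg v
      set t : Finset (↥N → Fin q) :=
        Finset.univ.filter (fun f => Function.Injective f) with ht
      have htcard : t.card = D := by
        rw [ht, ← Fintype.card_subtype]
        rw [Fintype.card_congr (Equiv.subtypeInjectiveEquivEmbedding ↥N (Fin q))]
        rw [Fintype.card_embedding_eq, Fintype.card_fin, hNcard]
      rw [← htcard]
      apply Finset.card_le_card_of_injOn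
        (fun (g : V → Option (Fin q)) (w : ↥N) => (g ↑w).getD ⟨0, hq0⟩)
      · intro g hg
        obtain ⟨φ, hφ, rfl⟩ := Finset.mem_image.mp hg
        have hφinj : Set.InjOn φ (G.neighborSet v) := by
          simp only [hSdef, Finset.mem_filter] at hφ
          exact hφ.2 v
        simp only [ht, Finset.mem_coe, Finset.mem_filter, Finset.mem_univ, true_and]
        intro w₁ w₂ hww
        have hw₁ : (w₁ : V) ∈ N := w₁.2
        have hw₂ : (w₂ : V) ∈ N := w₂.2
        simp only [res, hw₁, hw₂, if_pos, Option.getD_some] at hww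
        exact Subtype.ext (hφinj ((G.mem_neighborFinset v _).mp hw₁)
          ((G.mem_neighborFinset v _).mp hw₂) hww)
      · intro g hg g' hg' hgg
        obtain ⟨φ, hφ, rfl⟩ := Finset.mem_image.mp hg
        obtain ⟨ψ, hψ, rfl⟩ := Finset.mem_image.mp hg'
        funext w
        by_cases hw : w ∈ N
        · have := congrFun hgg ⟨w, hw⟩
          simp only [res, hw, if_pos, Option.getD_some] at this ⊢
          rw [this]
        · simp [res, hw]
    calc (𝓕.map (fun F => (proj F S).card)).prod
        ≤ (𝓕.map (fun _ => D)).prod := by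
          apply Multiset.prod_map_le_prod_map
          intro F hF
          rw [h𝓕] at hF
          obtain ⟨v, _, rfl⟩ := Multiset.mem_map.mp hF
          exact hbound v
      _ = D ^ n := by
          rw [Multiset.map_const', Multiset.prod_replicate, Multiset.card_map,
            Finset.card_val, Finset.card_univ]
  -- Step 2: pass to the reals
  have hD1 : (1:ℝ) ≤ (D:ℝ) := by
    have : q.descFactorial r ≠ 0 := by
      intro h0
      exact absurd (Nat.descFactorial_eq_zero_iff_lt.mp h0) (not_lt.mpr hq)
    have : 1 ≤ D := Nat.one_le_iff_ne_zero.mpr this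
    exact_mod_cast this
  have hrR : (r:ℝ) ≠ 0 := by positivity
  have ha0 : (0:ℝ) ≤ (S.card : ℝ) := by positivity
  have hb0 : (0:ℝ) ≤ (D : ℝ) := by linarith
  have hab : ((S.card : ℝ)) ^ (r:ℝ) ≤ ((D : ℝ)) ^ (n:ℝ) := by
    rw [Real.rpow_natCast, Real.rpow_natCast]
    exact_mod_cast hnat
  have h2 := Real.rpow_le_rpow (by positivity) hab (by positivity : (0:ℝ) ≤ 1 / r)
  rw [← Real.rpow_mul ha0, ← Real.rpow_mul hb0, mul_one_div, div_self hrR,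
    Real.rpow_one, mul_one_div] at h2
  exact h2
end
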